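/- arXiv:1912.04445 — 8 statements merged into one kernel-verified Lean document; each statement's English description precedes it below -/
import Mathlib

section
/- For all natural numbers n and m, the cylindrical board (7+2n)′×(6+2m) admits a fault-free domino tiling. -/
/-- Adjacency on the cylindrical board `a′ × b` (height `a`, circumference `b`):
cells `(i,j)` and `(i+1,j)` (vertical neighbors) or `(i,j)` and `(i,j+1)` with
addition in `ZMod b` (horizontal neighbors, wrapping around). -/
def cylAdj (a b : ℕ) (c d : Fin a × ZMod b) : Prop :=
  (c.2 = d.2 ∧ ((c.1 : ℕ) + 1 = (d.1 : ℕ) ∨ (d.1 : ℕ) + 1 = (c.1 : ℕ))) ∨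
  (c.1 = d.1 ∧ (d.2 = c.2 + 1 ∨ c.2 = d.2 + 1))

/-- A tiling of the cylindrical board: a set of dominoes (unordered pairs of
adjacent cells) such that every cell belongs to exactly one domino. -/
def cylIsTiling (a b : ℕ) (T : Set (Sym2 (Fin a × ZMod b))) : Prop :=
  (∀ p ∈ T, ∃ c d, cylAdj a b c d ∧ p = s(c, d)) ∧
  (∀ x : Fin a × ZMod b, ∃! p, p ∈ T ∧ x ∈ p)

/-- A tiling of the cylindrical board is fault-free if every horizontal fault-line
(between rows `i` and `i+1`, for `i + 1 < a`) and every vertical fault-line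
(between columns `j` and `j+1`, for `j : ZMod b`) is crossed by some domino. -/
def cylFaultFree (a b : ℕ) (T : Set (Sym2 (Fin a × ZMod b))) : Prop :=
  (∀ i : ℕ, i + 1 < a → ∃ c d : Fin a × ZMod b,
      s(c, d) ∈ T ∧ c.2 = d.2 ∧ (c.1 : ℕ) = i ∧ (d.1 : ℕ) = i + 1) ∧
  (∀ j : ZMod b, ∃ i : Fin a, s((i, j), (i, j + 1)) ∈ T)

/-- The cylindrical board `a′ × b` admits a fault-free domino tiling. -/
def cylFaultFreeTileable (a b : ℕ) : Prop :=
  ∃ T : Set (Sym2 (Fin a × ZMod b)), cylIsTiling a b T ∧ cylFaultFree a b T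

/-- rows of horizontal dominoes in column with value `v` (board height `a`). -/
def cylRows (a v : ℕ) : ℕ × ℕ × ℕ :=
  if v = 0 then (0,1,4)
  else if v = 1 then (0,3,4)
  else if v = 2 then (2,3,a-1)
  else if v = 3 then (2,5,a-1)
  else if v = 4 then (0,5,a-1)
  else if v = 5 then (0,1,a-1)
  else (0,1,2)

/-- direction of horizontal domino at row `i` of column `v`: true = to the right. -/
def cylDir (v i : ℕ) : Bool :=
  if v = 0 then decide (i ≠ 1)
  else if v = 1 then decide (i = 3)
  else if v = 2 then decide (i ≠ 3)
  else if v = 3 then decide (i = 5)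
  else if v = 4 then decide (i ≠ 5)
  else if v = 5 then decide (i = 1)
  else if v % 2 = 0 then decide (i ≠ 1)
  else decide (i = 1)

def cylCnt (r : ℕ × ℕ × ℕ) (i : ℕ) : ℕ :=
  (if r.1 < i then 1 else 0) + (if r.2.1 < i then 1 else 0) + (if r.2.2 < i then 1 else 0)

def cylNr (r : ℕ × ℕ × ℕ) (i : ℕ) : ℕ :=
  if (i + cylCnt r i) % 2 = 0 then i + 1 else i - 1

def cylIsHor (a v i : ℕ) : Prop :=
  i = (cylRows a v).1 ∨ i = (cylRows a v).2.1 ∨ i = (cylRows a v).2.2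

instance (a v i : ℕ) : Decidable (cylIsHor a v i) := by unfold cylIsHor; infer_instance

def cylF (a b : ℕ) (x : Fin a × ZMod b) : Fin a × ZMod b :=
  if cylIsHor a x.2.val x.1.val then
    (x.1, if cylDir x.2.val x.1.val then x.2 + 1 else x.2 - 1)
  else
    (⟨cylNr (cylRows a x.2.val) x.1.val % a, Nat.mod_lt _ x.1.pos⟩, x.2)

lemma rows_spec (n v : ℕ) :
    (cylRows (7+2*n) v).1 % 2 = 0 ∧ (cylRows (7+2*n) v).2.1 % 2 = 1 ∧
    (cylRows (7+2*n) v).2.2 % 2 = 0 ∧ (cylRows (7+2*n) v).1 < (cylRows (7+2*n) v).2.1 ∧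
    (cylRows (7+2*n) v).2.1 < (cylRows (7+2*n) v).2.2 ∧ (cylRows (7+2*n) v).2.2 < 7+2*n := by
  simp only [cylRows]
  split_ifs <;> simp <;> omega

lemma cnt_lemma (r1 r2 r3 i : ℕ) (h12 : r1 < r2) (h23 : r2 < r3) :
    (i ≤ r1 ∧ cylCnt (r1,r2,r3) i = 0) ∨ (r1 < i ∧ i ≤ r2 ∧ cylCnt (r1,r2,r3) i = 1) ∨
    (r2 < i ∧ i ≤ r3 ∧ cylCnt (r1,r2,r3) i = 2) ∨ (r3 < i ∧ cylCnt (r1,r2,r3) i = 3) := by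
  simp only [cylCnt]
  split_ifs <;> omega

lemma nr_spec (a : ℕ) (r : ℕ × ℕ × ℕ) (i : ℕ) (ha : a % 2 = 1)
    (hp1 : r.1 % 2 = 0) (hp2 : r.2.1 % 2 = 1) (hp3 : r.2.2 % 2 = 0)
    (h12 : r.1 < r.2.1) (h23 : r.2.1 < r.2.2) (h3a : r.2.2 < a)
    (hi : i < a) (hne : ¬(i = r.1 ∨ i = r.2.1 ∨ i = r.2.2)) :
    cylNr r i < a ∧ ¬(cylNr r i = r.1 ∨ cylNr r i = r.2.1 ∨ cylNr r i = r.2.2) ∧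
    cylNr r (cylNr r i) = i ∧ (cylNr r i = i + 1 ∨ cylNr r i + 1 = i) := by
  rcases r with ⟨r1, r2, r3⟩
  simp only at *
  push_neg at hne
  obtain ⟨h1, h2, h3⟩ := hne
  have A := cnt_lemma r1 r2 r3 i h12 h23
  by_cases hpar : (i + cylCnt (r1,r2,r3) i) % 2 = 0
  · have hni : cylNr (r1,r2,r3) i = i + 1 := if_pos hpar
    have B := cnt_lemma r1 r2 r3 (i+1) h12 h23
    have hcc : cylCnt (r1,r2,r3) (i+1) = cylCnt (r1,r2,r3) i := by omega
    have hn2 : cylNr (r1,r2,r3) (i+1) = i := by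
      rw [cylNr, if_neg (by omega)]
      omega
    rw [hni, hn2]
    refine ⟨by omega, by omega, rfl, Or.inl rfl⟩
  · have hni : cylNr (r1,r2,r3) i = i - 1 := if_neg hpar
    have hi1 : 1 ≤ i := by omega
    have B := cnt_lemma r1 r2 r3 (i-1) h12 h23
    have hcc : cylCnt (r1,r2,r3) (i-1) = cylCnt (r1,r2,r3) i := by omega
    have hn2 : cylNr (r1,r2,r3) (i-1) = i := by
      rw [cylNr, if_pos (by omega)]
      omega
    rw [hni, hn2]
    refine ⟨by omega, by omega, rfl, by omega⟩

lemma myval_add_one {b : ℕ} [NeZero b] (j : ZMod b) :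
    (j + 1).val = if j.val + 1 = b then 0 else j.val + 1 := by
  have h : j + 1 = ((j.val + 1 : ℕ) : ZMod b) := by
    push_cast [ZMod.natCast_rightInverse j]; rfl
  rw [h, ZMod.val_natCast]
  have hv := ZMod.val_lt j
  rcases Nat.lt_or_ge (j.val + 1) b with h1 | h1
  · rw [Nat.mod_eq_of_lt h1, if_neg (by omega)]
  · have h2 : j.val + 1 = b := by omega
    rw [if_pos h2, h2, Nat.mod_self]

lemma myval_sub_one {b : ℕ} [NeZero b] (j : ZMod b) :
    (j - 1).val = if j.val = 0 then b - 1 else j.val - 1 := by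
  have hb : 0 < b := Nat.pos_of_ne_zero (NeZero.ne b)
  have h : j - 1 = ((j.val + (b - 1) : ℕ) : ZMod b) := by
    push_cast [ZMod.natCast_rightInverse j]
    have h0 : ((b : ZMod b)) = 0 := ZMod.natCast_self b
    have hb1 : ((b - 1 : ℕ) : ZMod b) = (b : ZMod b) - 1 := by
      push_cast [Nat.cast_sub hb]; rfl
    rw [hb1, h0]; ring
  rw [h, ZMod.val_natCast]
  have hv := ZMod.val_lt j
  rcases Nat.eq_zero_or_pos j.val with h1 | h1
  · rw [if_pos h1, h1]; simp [Nat.mod_eq_of_lt (by omega : b - 1 < b)]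
  · rw [if_neg (by omega)]
    have h2 : j.val + (b - 1) = b + (j.val - 1) := by omega
    rw [h2, Nat.add_mod_left, Nat.mod_eq_of_lt (by omega)]

lemma rows_ge6 (a v : ℕ) (h : 6 ≤ v) : cylRows a v = (0,1,2) := by
  simp only [cylRows]
  rw [if_neg (by omega), if_neg (by omega), if_neg (by omega), if_neg (by omega),
    if_neg (by omega), if_neg (by omega)]

lemma dir_even (v i : ℕ) (h : 6 ≤ v) (he : v % 2 = 0) : cylDir v i = decide (i ≠ 1) := by
  simp only [cylDir]
  rw [if_neg (by omega), if_neg (by omega), if_neg (by omega), if_neg (by omega),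
    if_neg (by omega), if_neg (by omega), if_pos he]

lemma dir_odd (v i : ℕ) (h : 7 ≤ v) (ho : v % 2 = 1) : cylDir v i = decide (i = 1) := by
  simp only [cylDir]
  rw [if_neg (by omega), if_neg (by omega), if_neg (by omega), if_neg (by omega),
    if_neg (by omega), if_neg (by omega), if_neg (by omega)]

lemma step_right (n m : ℕ) (j : ZMod (6+2*m)) (i : ℕ)
    (hH : cylIsHor (7+2*n) j.val i) (hd : cylDir j.val i = true) :
    cylIsHor (7+2*n) (j+1).val i ∧ cylDir (j+1).val i = false := by
  haveI : NeZero (6+2*m) := ⟨by omega⟩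
  have hv : j.val < 6+2*m := ZMod.val_lt j
  have hval := myval_add_one j
  have hcase : j.val = 0 ∨ j.val = 1 ∨ j.val = 2 ∨ j.val = 3 ∨ j.val = 4 ∨
      (j.val = 5 ∧ m = 0) ∨ (j.val = 5 ∧ 1 ≤ m) ∨
      (6 ≤ j.val ∧ j.val % 2 = 0) ∨ (7 ≤ j.val ∧ j.val % 2 = 1 ∧ j.val + 1 = 6+2*m) ∨
      (7 ≤ j.val ∧ j.val % 2 = 1 ∧ j.val + 1 < 6+2*m) := by omega
  rcases hcase with hc|hc|hc|hc|hc|⟨hc,hm⟩|⟨hc,hm⟩|⟨hc,he⟩|⟨hc,he,hb⟩|⟨hc,he,hb⟩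
  · have h1 : (j+1).val = 1 := by rw [hval]; split_ifs <;> omega
    rw [h1]
    rw [hc] at hH hd
    simp only [cylIsHor, cylRows, cylDir] at hH hd ⊢
    norm_num at hH hd ⊢
    omega
  · have h1 : (j+1).val = 2 := by rw [hval]; split_ifs <;> omega
    rw [h1]
    rw [hc] at hH hd
    simp only [cylIsHor, cylRows, cylDir] at hH hd ⊢
    norm_num at hH hd ⊢
    omega
  · have h1 : (j+1).val = 3 := by rw [hval]; split_ifs <;> omega
    rw [h1]
    rw [hc] at hH hd
    simp only [cylIsHor, cylRows, cylDir] at hH hd ⊢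
    norm_num at hH hd ⊢
    omega
  · have h1 : (j+1).val = 4 := by rw [hval]; split_ifs <;> omega
    rw [h1]
    rw [hc] at hH hd
    simp only [cylIsHor, cylRows, cylDir] at hH hd ⊢
    norm_num at hH hd ⊢
    omega
  · have h1 : (j+1).val = 5 := by rw [hval]; split_ifs <;> omega
    rw [h1]
    rw [hc] at hH hd
    simp only [cylIsHor, cylRows, cylDir] at hH hd ⊢
    norm_num at hH hd ⊢
    omega
  · have h1 : (j+1).val = 0 := by rw [hval]; split_ifs <;> omega
    rw [h1]
    rw [hc] at hH hd
    simp only [cylIsHor, cylRows, cylDir] at hH hd ⊢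
    norm_num at hH hd ⊢
    omega
  · have h1 : (j+1).val = 6 := by rw [hval]; split_ifs <;> omega
    rw [h1]
    rw [hc] at hH hd
    simp only [cylIsHor, cylRows, cylDir] at hH hd ⊢
    norm_num at hH hd ⊢
    omega
  · have h1 : (j+1).val = j.val + 1 := by rw [hval]; split_ifs <;> omega
    rw [h1]
    rw [dir_even _ _ (by omega) he] at hd
    simp only [cylIsHor] at hH ⊢
    rw [rows_ge6 _ _ (by omega)] at hH
    rw [rows_ge6 _ _ (by omega)]
    rw [dir_odd _ _ (by omega) (by omega)]
    norm_num at hH hd ⊢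
    omega
  · have h1 : (j+1).val = 0 := by rw [hval]; split_ifs <;> omega
    rw [h1]
    rw [dir_odd _ _ (by omega) he] at hd
    simp only [cylIsHor] at hH ⊢
    rw [rows_ge6 _ _ (by omega)] at hH
    simp only [cylRows, cylDir]
    norm_num at hH hd ⊢
    omega
  · have h1 : (j+1).val = j.val + 1 := by rw [hval]; split_ifs <;> omega
    rw [h1]
    rw [dir_odd _ _ (by omega) he] at hd
    simp only [cylIsHor] at hH ⊢
    rw [rows_ge6 _ _ (by omega)] at hH
    rw [rows_ge6 _ _ (by omega)]
    rw [dir_even _ _ (by omega) (by omega)]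
    norm_num at hH hd ⊢
    omega

lemma step_left (n m : ℕ) (j : ZMod (6+2*m)) (i : ℕ)
    (hH : cylIsHor (7+2*n) j.val i) (hd : cylDir j.val i = false) :
    cylIsHor (7+2*n) (j-1).val i ∧ cylDir (j-1).val i = true := by
  haveI : NeZero (6+2*m) := ⟨by omega⟩
  have hv : j.val < 6+2*m := ZMod.val_lt j
  have hval := myval_sub_one j
  have hcase : (j.val = 0 ∧ m = 0) ∨ (j.val = 0 ∧ 1 ≤ m) ∨ j.val = 1 ∨ j.val = 2 ∨
      j.val = 3 ∨ j.val = 4 ∨ j.val = 5 ∨ j.val = 6 ∨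
      (8 ≤ j.val ∧ j.val % 2 = 0) ∨ (7 ≤ j.val ∧ j.val % 2 = 1) := by omega
  rcases hcase with ⟨hc,hm⟩|⟨hc,hm⟩|hc|hc|hc|hc|hc|hc|⟨hc,he⟩|⟨hc,he⟩
  · have h1 : (j-1).val = 5 := by rw [hval]; split_ifs <;> omega
    rw [h1]; rw [hc] at hH hd
    simp only [cylIsHor, cylRows, cylDir] at hH hd ⊢
    norm_num at hH hd ⊢
    omega
  · have h1 : (j-1).val = 5 + 2*m := by rw [hval]; split_ifs <;> omega
    rw [h1]; rw [hc] at hH hd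
    simp only [cylIsHor, cylRows, cylDir] at hH hd
    simp only [cylIsHor]
    rw [rows_ge6 _ _ (by omega), dir_odd _ _ (by omega) (by omega)]
    norm_num at hH hd ⊢
    omega
  · have h1 : (j-1).val = 0 := by rw [hval]; split_ifs <;> omega
    rw [h1]; rw [hc] at hH hd
    simp only [cylIsHor, cylRows, cylDir] at hH hd ⊢
    norm_num at hH hd ⊢
    omega
  · have h1 : (j-1).val = 1 := by rw [hval]; split_ifs <;> omega
    rw [h1]; rw [hc] at hH hd
    simp only [cylIsHor, cylRows, cylDir] at hH hd ⊢
    norm_num at hH hd ⊢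
    omega
  · have h1 : (j-1).val = 2 := by rw [hval]; split_ifs <;> omega
    rw [h1]; rw [hc] at hH hd
    simp only [cylIsHor, cylRows, cylDir] at hH hd ⊢
    norm_num at hH hd ⊢
    omega
  · have h1 : (j-1).val = 3 := by rw [hval]; split_ifs <;> omega
    rw [h1]; rw [hc] at hH hd
    simp only [cylIsHor, cylRows, cylDir] at hH hd ⊢
    norm_num at hH hd ⊢
    omega
  · have h1 : (j-1).val = 4 := by rw [hval]; split_ifs <;> omega
    rw [h1]; rw [hc] at hH hd
    simp only [cylIsHor, cylRows, cylDir] at hH hd ⊢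
    norm_num at hH hd ⊢
    omega
  · have h1 : (j-1).val = 5 := by rw [hval]; split_ifs <;> omega
    rw [h1]; rw [hc] at hH hd
    simp only [cylIsHor, cylRows, cylDir] at hH hd ⊢
    norm_num at hH hd ⊢
    omega
  · have h1 : (j-1).val = j.val - 1 := by rw [hval]; split_ifs <;> omega
    rw [h1]
    rw [dir_even _ _ (by omega) he] at hd
    simp only [cylIsHor] at hH ⊢
    rw [rows_ge6 _ _ (by omega)] at hH
    rw [rows_ge6 _ _ (by omega), dir_odd _ _ (by omega) (by omega)]
    norm_num at hH hd ⊢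
    omega
  · have h1 : (j-1).val = j.val - 1 := by rw [hval]; split_ifs <;> omega
    rw [h1]
    rw [dir_odd _ _ (by omega) he] at hd
    simp only [cylIsHor] at hH ⊢
    rw [rows_ge6 _ _ (by omega)] at hH
    rw [rows_ge6 _ _ (by omega), dir_even _ _ (by omega) (by omega)]
    norm_num at hH hd ⊢
    omega

lemma f_vert_val (a b : ℕ) (x : Fin a × ZMod b) (hH : ¬ cylIsHor a x.2.val x.1.val) :
    ((cylF a b x).1 : ℕ) = cylNr (cylRows a x.2.val) x.1.val % a ∧ (cylF a b x).2 = x.2 := by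
  rw [cylF, if_neg hH]
  exact ⟨rfl, rfl⟩

lemma f_hor_eq (a b : ℕ) (x : Fin a × ZMod b) (hH : cylIsHor a x.2.val x.1.val) :
    cylF a b x = (x.1, if cylDir x.2.val x.1.val then x.2 + 1 else x.2 - 1) := by
  rw [cylF, if_pos hH]

lemma nr_full (n : ℕ) (v i : ℕ) (hi : i < 7+2*n) (hH : ¬ cylIsHor (7+2*n) v i) :
    cylNr (cylRows (7+2*n) v) i < 7+2*n ∧
    ¬ cylIsHor (7+2*n) v (cylNr (cylRows (7+2*n) v) i) ∧
    cylNr (cylRows (7+2*n) v) (cylNr (cylRows (7+2*n) v) i) = i ∧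
    (cylNr (cylRows (7+2*n) v) i = i + 1 ∨ cylNr (cylRows (7+2*n) v) i + 1 = i) := by
  have R := rows_spec n v
  exact nr_spec (7+2*n) (cylRows (7+2*n) v) i (by omega) R.1 R.2.1 R.2.2.1 R.2.2.2.1
    R.2.2.2.2.1 R.2.2.2.2.2 hi hH

lemma f_invol (n m : ℕ) (x : Fin (7+2*n) × ZMod (6+2*m)) :
    cylF (7+2*n) (6+2*m) (cylF (7+2*n) (6+2*m) x) = x := by
  by_cases hH : cylIsHor (7+2*n) x.2.val x.1.val
  · rw [f_hor_eq _ _ _ hH]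
    by_cases hd : cylDir x.2.val x.1.val = true
    · rw [if_pos hd]
      obtain ⟨hH', hd'⟩ := step_right n m x.2 x.1.val hH hd
      rw [f_hor_eq _ _ _ hH', if_neg (by simp [hd'])]
      simp
    · have hd2 : cylDir x.2.val x.1.val = false := by
        revert hd; cases cylDir x.2.val x.1.val <;> simp
      rw [if_neg hd]
      obtain ⟨hH', hd'⟩ := step_left n m x.2 x.1.val hH hd2
      rw [f_hor_eq _ _ _ hH', if_pos hd']
      simp
  · obtain ⟨hval1, hval2⟩ := f_vert_val _ _ x hH
    have S := nr_full n x.2.val x.1.val x.1.isLt hH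
    have hv1 : ((cylF (7+2*n) (6+2*m) x).1 : ℕ) = cylNr (cylRows (7+2*n) x.2.val) x.1.val := by
      rw [hval1, Nat.mod_eq_of_lt S.1]
    have hH2 : ¬ cylIsHor (7+2*n) ((cylF (7+2*n) (6+2*m) x).2.val)
        ((cylF (7+2*n) (6+2*m) x).1 : ℕ) := by
      rw [hval2, hv1]; exact S.2.1
    obtain ⟨h2a, h2b⟩ := f_vert_val _ _ (cylF (7+2*n) (6+2*m) x) hH2
    refine Prod.ext (Fin.ext ?_) ?_
    · rw [h2a, hval2, hv1, S.2.2.1, Nat.mod_eq_of_lt x.1.isLt]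
    · rw [h2b, hval2]

lemma f_adj (n m : ℕ) (x : Fin (7+2*n) × ZMod (6+2*m)) :
    cylAdj (7+2*n) (6+2*m) x (cylF (7+2*n) (6+2*m) x) := by
  by_cases hH : cylIsHor (7+2*n) x.2.val x.1.val
  · rw [f_hor_eq _ _ _ hH]
    right
    refine ⟨rfl, ?_⟩
    by_cases hd : cylDir x.2.val x.1.val = true
    · rw [if_pos hd]; exact Or.inl rfl
    · have hd2 : cylDir x.2.val x.1.val = false := by
        revert hd; cases cylDir x.2.val x.1.val <;> simp
      rw [if_neg hd]
      right
      exact (sub_add_cancel x.2 1).symm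
  · obtain ⟨hval1, hval2⟩ := f_vert_val _ _ x hH
    have S := nr_full n x.2.val x.1.val x.1.isLt hH
    have hv1 : ((cylF (7+2*n) (6+2*m) x).1 : ℕ) = cylNr (cylRows (7+2*n) x.2.val) x.1.val := by
      rw [hval1, Nat.mod_eq_of_lt S.1]
    left
    refine ⟨hval2.symm, ?_⟩
    rw [hv1]
    omega

lemma hor_fault (n m : ℕ) (i w : ℕ) (hw : w < 6) (hi : i + 1 < 7+2*n)
    (hnh : ¬ cylIsHor (7+2*n) w i)
    (hnr : cylNr (cylRows (7+2*n) w) i = i + 1) :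
    ∃ c d : Fin (7+2*n) × ZMod (6+2*m),
      s(c,d) ∈ Set.range (fun x => s(x, cylF (7+2*n) (6+2*m) x)) ∧
      c.2 = d.2 ∧ (c.1 : ℕ) = i ∧ (d.1 : ℕ) = i+1 := by
  haveI : NeZero (6+2*m) := ⟨by omega⟩
  set j : ZMod (6+2*m) := ((w : ℕ) : ZMod (6+2*m)) with hj
  have hjv : j.val = w := by rw [hj, ZMod.val_natCast]; exact Nat.mod_eq_of_lt (by omega)
  set c : Fin (7+2*n) × ZMod (6+2*m) := (⟨i, by omega⟩, j) with hc
  have hH : ¬ cylIsHor (7+2*n) c.2.val (c.1 : ℕ) := by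
    rw [hc]
    simp only [hjv]
    exact hnh
  obtain ⟨h1, h2⟩ := f_vert_val _ _ c hH
  refine ⟨c, cylF (7+2*n) (6+2*m) c, ⟨c, rfl⟩, h2.symm, rfl, ?_⟩
  rw [h1]
  show cylNr (cylRows (7+2*n) j.val) i % (7+2*n) = i + 1
  rw [hjv, hnr, Nat.mod_eq_of_lt hi]

lemma vert_fault (n m : ℕ) (j : ZMod (6+2*m)) (r : ℕ) (hr : r < 7+2*n)
    (hh : cylIsHor (7+2*n) j.val r) (hd : cylDir j.val r = true) :
    s(((⟨r, hr⟩ : Fin (7+2*n)), j), ((⟨r, hr⟩ : Fin (7+2*n)), j + 1)) ∈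
      Set.range (fun x => s(x, cylF (7+2*n) (6+2*m) x)) := by
  refine ⟨((⟨r, hr⟩ : Fin (7+2*n)), j), ?_⟩
  have h2 := f_hor_eq (7+2*n) (6+2*m) ((⟨r, hr⟩ : Fin (7+2*n)), j) hh
  dsimp only at h2 ⊢
  rw [h2, if_pos hd]

theorem cylAuxMain : ∀ n m : ℕ, cylFaultFreeTileable (7 + 2 * n) (6 + 2 * m) := by
  intro n m
  haveI : NeZero (6+2*m) := ⟨by omega⟩
  refine ⟨Set.range (fun x => s(x, cylF (7+2*n) (6+2*m) x)), ⟨?_, ?_⟩, ?_, ?_⟩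
  · rintro p ⟨x, rfl⟩
    exact ⟨x, cylF (7+2*n) (6+2*m) x, f_adj n m x, rfl⟩
  · intro x
    refine ⟨s(x, cylF (7+2*n) (6+2*m) x), ⟨⟨x, rfl⟩, Sym2.mem_iff.mpr (Or.inl rfl)⟩, ?_⟩
    rintro p ⟨⟨y, rfl⟩, hxp⟩
    rw [Sym2.mem_iff] at hxp
    rcases hxp with h | h
    · subst h; rfl
    · subst h
      rw [f_invol n m y]
      exact Sym2.eq_swap
  · -- horizontal fault lines
    intro i hi
    have hcase : i = 0 ∨ i = 1 ∨ i = 2 ∨ i = 3 ∨ (4 ≤ i ∧ i % 2 = 0) ∨ (5 ≤ i ∧ i % 2 = 1) := by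
      omega
    rcases hcase with hc | hc | hc | hc | ⟨hc, he⟩ | ⟨hc, he⟩
    · subst hc
      refine hor_fault n m 0 2 (by omega) (by omega) ?_ ?_
      · simp only [cylIsHor, cylRows]; norm_num; omega
      · simp only [cylNr, cylCnt, cylRows]; norm_num
    · subst hc
      refine hor_fault n m 1 1 (by omega) (by omega) ?_ ?_
      · simp only [cylIsHor, cylRows]; norm_num
      · simp only [cylNr, cylCnt, cylRows]; norm_num
    · subst hc
      refine hor_fault n m 2 0 (by omega) (by omega) ?_ ?_
      · simp only [cylIsHor, cylRows]; norm_num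
      · simp only [cylNr, cylCnt, cylRows]; norm_num
    · subst hc
      refine hor_fault n m 3 3 (by omega) (by omega) ?_ ?_
      · simp only [cylIsHor, cylRows]; norm_num; omega
      · simp only [cylNr, cylCnt, cylRows]; norm_num
        split_ifs <;> omega
    · refine hor_fault n m i 2 (by omega) (by omega) ?_ ?_
      · simp only [cylIsHor, cylRows]; norm_num; omega
      · simp only [cylNr, cylCnt, cylRows]; norm_num
        split_ifs <;> omega
    · refine hor_fault n m i 0 (by omega) (by omega) ?_ ?_
      · simp only [cylIsHor, cylRows]; norm_num; omega
      · simp only [cylNr, cylCnt, cylRows]; norm_num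
        split_ifs <;> omega
  · -- vertical fault lines
    intro j
    have hv : j.val < 6+2*m := ZMod.val_lt j
    have hcase : j.val = 0 ∨ j.val = 1 ∨ j.val = 2 ∨ j.val = 3 ∨ j.val = 4 ∨ j.val = 5 ∨
        (6 ≤ j.val ∧ j.val % 2 = 0) ∨ (7 ≤ j.val ∧ j.val % 2 = 1) := by omega
    rcases hcase with hc | hc | hc | hc | hc | hc | ⟨hc, he⟩ | ⟨hc, he⟩
    · exact ⟨⟨0, by omega⟩, vert_fault n m j 0 (by omega)
        (by rw [hc]; simp [cylIsHor, cylRows]) (by rw [hc]; simp [cylDir])⟩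
    · exact ⟨⟨3, by omega⟩, vert_fault n m j 3 (by omega)
        (by rw [hc]; simp [cylIsHor, cylRows]) (by rw [hc]; simp [cylDir])⟩
    · exact ⟨⟨2, by omega⟩, vert_fault n m j 2 (by omega)
        (by rw [hc]; simp [cylIsHor, cylRows]) (by rw [hc]; simp [cylDir])⟩
    · exact ⟨⟨5, by omega⟩, vert_fault n m j 5 (by omega)
        (by rw [hc]; simp [cylIsHor, cylRows]) (by rw [hc]; simp [cylDir])⟩
    · exact ⟨⟨0, by omega⟩, vert_fault n m j 0 (by omega)
        (by rw [hc]; simp [cylIsHor, cylRows]) (by rw [hc]; simp [cylDir])⟩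
    · exact ⟨⟨1, by omega⟩, vert_fault n m j 1 (by omega)
        (by rw [hc]; simp [cylIsHor, cylRows]) (by rw [hc]; simp [cylDir])⟩
    · exact ⟨⟨0, by omega⟩, vert_fault n m j 0 (by omega)
        (by simp only [cylIsHor, rows_ge6 _ _ hc]; norm_num)
        (by rw [dir_even _ _ hc he]; norm_num)⟩
    · exact ⟨⟨1, by omega⟩, vert_fault n m j 1 (by omega)
        (by have h := rows_ge6 (7+2*n) j.val (by omega : 6 ≤ j.val)
            simp only [cylIsHor, h]; norm_num)
        (by rw [dir_odd _ _ hc he]; norm_num)⟩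

/-- For all natural numbers `n` and `m`, the cylindrical board
`(7 + 2 * n)′ × (6 + 2 * m)` admits a fault-free domino tiling. -/
theorem cyl_faultFree_7'6 :
    ∀ n m : ℕ, cylFaultFreeTileable (7 + 2 * n) (6 + 2 * m) :=
  cylAuxMain
end

section
/- For all natural numbers n and m, the cylindrical board (6+2n)′×(7+2m) admits a fault-free domino tiling. -/
namespace CylFF

lemma natCast_val' {b : ℕ} [NeZero b] (x : ZMod b) : ((x.val : ℕ) : ZMod b) = x := by
  simp [ZMod.natCast_val, ZMod.cast_id]

lemma val_shift_eq {b : ℕ} [NeZero b] (x : ZMod b) (q c v : ℕ) (hx : x.val = q)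
    (hv : q + c = v ∨ q + c = v + b) (hvb : v < b) : (x + ((c : ℕ) : ZMod b)).val = v := by
  rw [← natCast_val' x, hx, ← Nat.cast_add, ZMod.val_natCast]
  rcases hv with h' | h' <;> rw [h']
  · exact Nat.mod_eq_of_lt hvb
  · rw [Nat.add_mod_right]; exact Nat.mod_eq_of_lt hvb

lemma sub_shift {b : ℕ} [NeZero b] (j : ZMod b) (t t' c e e' : ℕ)
    (h : t' + c + e * b = t + e' * b) :
    j - (t' : ZMod b) = (j - (t : ZMod b)) + (c : ZMod b) := by
  have h1 : ((t' + c + e * b : ℕ) : ZMod b) = ((t + e' * b : ℕ) : ZMod b) := by rw [h]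
  push_cast [ZMod.natCast_self] at h1
  have h2 : (t' : ZMod b) + c = t := by linear_combination h1
  rw [← h2]; ring

lemma qval {b : ℕ} [NeZero b] (j : ZMod b) (t t' c e e' q v : ℕ)
    (h : t' + c + e * b = t + e' * b) (hq : (j - (t : ZMod b)).val = q)
    (hv : q + c = v ∨ q + c = v + b) (hvb : v < b) :
    (j - (t' : ZMod b)).val = v := by
  rw [sub_shift j t t' c e e' h]
  exact val_shift_eq _ q c v hq hv hvb

lemma q_right {b : ℕ} [NeZero b] (j : ZMod b) (t q v : ℕ)
    (hq : (j - (t : ZMod b)).val = q) (hv : q + 1 = v ∨ q + 1 = v + b) (hvb : v < b) :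
    ((j + 1) - (t : ZMod b)).val = v := by
  have e : (j + 1) - (t : ZMod b) = (j - (t : ZMod b)) + ((1 : ℕ) : ZMod b) := by
    push_cast; ring
  rw [e]; exact val_shift_eq _ q 1 v hq hv hvb

lemma q_left {b : ℕ} [NeZero b] (hb : 1 ≤ b) (j : ZMod b) (t q v : ℕ)
    (hq : (j - (t : ZMod b)).val = q) (hv : q + (b - 1) = v ∨ q + (b - 1) = v + b)
    (hvb : v < b) : ((j - 1) - (t : ZMod b)).val = v := by
  have e : (j - 1) - (t : ZMod b) = (j - (t : ZMod b)) + ((b - 1 : ℕ) : ZMod b) := by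
    rw [Nat.cast_sub hb, ZMod.natCast_self]; push_cast; ring
  rw [e]; exact val_shift_eq _ q (b - 1) v hq hv hvb

def tnat (b r : ℕ) : ℕ := if r % 2 = 0 then 3 * (r / 2) + b - 2 else 3 * (r / 2)

def up (a : ℕ) (i : Fin a) : Fin a := ⟨i.1 - 1, lt_of_le_of_lt (Nat.sub_le _ _) i.2⟩
def dn (a : ℕ) (i : Fin a) : Fin a := ⟨min (i.1 + 1) (a - 1), by have := i.2; omega⟩

def pf (a b : ℕ) (x : Fin a × ZMod b) : Fin a × ZMod b :=
  let r := x.1.1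
  let j := x.2
  let q := (j - (tnat b r : ZMod b)).val
  if r % 2 = 0 then
    if q = 0 then (if r = 0 then (x.1, j + 1) else (up a x.1, j))
    else if q = 1 then (if r = 0 then (x.1, j - 1) else (up a x.1, j))
    else if q = 2 then (dn a x.1, j)
    else if q % 2 = 1 then (x.1, j + 1) else (x.1, j - 1)
  else
    if q = 0 then (up a x.1, j)
    else if q = 1 then (if r = a - 1 then (x.1, j + 1) else (dn a x.1, j))
    else if q = 2 then (if r = a - 1 then (x.1, j - 1) else (dn a x.1, j))
    else if q % 2 = 1 then (x.1, j + 1) else (x.1, j - 1)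

section Main

variable {a b : ℕ} [NeZero b]

lemma tE (s : ℕ) (hs : s % 2 = 0) : tnat b s = 3 * (s / 2) + b - 2 := by
  unfold tnat; rw [if_pos hs]

lemma tO (s : ℕ) (hs : ¬ s % 2 = 0) : tnat b s = 3 * (s / 2) := by
  unfold tnat; rw [if_neg hs]

set_option maxHeartbeats 2000000 in
lemma pf_good (ha2 : a % 2 = 0) (ha : 6 ≤ a) (hb2 : b % 2 = 1) (hb : 7 ≤ b)
    (x : Fin a × ZMod b) : cylAdj a b x (pf a b x) ∧ pf a b (pf a b x) = x := by
  obtain ⟨⟨r, hr⟩, j⟩ := x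
  set q := (j - (tnat b r : ZMod b)).val with hqdef
  have hq : (j - (tnat b r : ZMod b)).val = q := hqdef.symm
  have hqlt : q < b := ZMod.val_lt _
  by_cases hr2 : r % 2 = 0
  · by_cases hq0 : q = 0
    · by_cases hr0 : r = 0
      · -- A1 : right
        have h1 : pf a b (⟨r, hr⟩, j) = (⟨r, hr⟩, j + 1) := by
          simp only [pf]; rw [hq, hq0]; simp [hr2, hr0]
        refine ⟨by rw [h1]; right; exact ⟨rfl, Or.inl rfl⟩, ?_⟩
        rw [h1]
        have hq' : ((j + 1) - (tnat b r : ZMod b)).val = 1 :=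
          q_right j _ q 1 hq (by omega) (by omega)
        simp only [pf]; rw [hq']; simp [hr2, hr0]
      · -- A2 : up
        have h1 : pf a b (⟨r, hr⟩, j) = (⟨r - 1, by omega⟩, j) := by
          simp only [pf]; rw [hq, hq0]; simp [hr2, hr0, up]
        refine ⟨by rw [h1]; left; exact ⟨rfl, Or.inr (by simp; omega)⟩, ?_⟩
        rw [h1]
        have hq' : (j - (tnat b (r - 1) : ZMod b)).val = 1 :=
          qval j (tnat b r) (tnat b (r - 1)) 1 1 0 q 1
            (by rw [tE r hr2, tO (r - 1) (by omega)]; omega) hq (by omega) (by omega)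
        simp only [pf]; rw [hq']
        simp [show ¬ (r - 1) % 2 = 0 by omega, show ¬ (r - 1) = a - 1 by omega, dn,
          Prod.ext_iff, Fin.ext_iff]
        omega
    · by_cases hq1 : q = 1
      · by_cases hr0 : r = 0
        · -- A3 : left
          have h1 : pf a b (⟨r, hr⟩, j) = (⟨r, hr⟩, j - 1) := by
            simp only [pf]; rw [hq, hq1]; simp [hr2, hr0]
          refine ⟨by rw [h1]; right; exact ⟨rfl, Or.inr (by ring)⟩, ?_⟩
          rw [h1]
          have hq' : ((j - 1) - (tnat b r : ZMod b)).val = 0 :=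
            q_left (by omega) j _ q 0 hq (by omega) (by omega)
          simp only [pf]; rw [hq']; simp [hr2, hr0]
        · -- A4 : up
          have h1 : pf a b (⟨r, hr⟩, j) = (⟨r - 1, by omega⟩, j) := by
            simp only [pf]; rw [hq, hq1]; simp [hr2, hr0, up]
          refine ⟨by rw [h1]; left; exact ⟨rfl, Or.inr (by simp; omega)⟩, ?_⟩
          rw [h1]
          have hq' : (j - (tnat b (r - 1) : ZMod b)).val = 2 :=
            qval j (tnat b r) (tnat b (r - 1)) 1 1 0 q 2
              (by rw [tE r hr2, tO (r - 1) (by omega)]; omega) hq (by omega) (by omega)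
          simp only [pf]; rw [hq']
          simp [show ¬ (r - 1) % 2 = 0 by omega, show ¬ (r - 1) = a - 1 by omega, dn,
            Prod.ext_iff, Fin.ext_iff]
          omega
      · by_cases hq2 : q = 2
        · -- A5 : down
          have h1 : pf a b (⟨r, hr⟩, j) = (⟨r + 1, by omega⟩, j) := by
            simp only [pf]; rw [hq, hq2]
            simp [hr2, dn, Prod.ext_iff, Fin.ext_iff]
            omega
          refine ⟨by rw [h1]; left; exact ⟨rfl, Or.inl (by simp)⟩, ?_⟩
          rw [h1]
          have hq' : (j - (tnat b (r + 1) : ZMod b)).val = 0 :=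
            qval j (tnat b r) (tnat b (r + 1)) (b - 2) 0 0 q 0
              (by rw [tE r hr2, tO (r + 1) (by omega)]; omega) hq (by omega) (by omega)
          simp only [pf]; rw [hq']
          simp [show ¬ (r + 1) % 2 = 0 by omega, up, Prod.ext_iff, Fin.ext_iff]
        · by_cases hqp : q % 2 = 1
          · -- A6 : right
            have h1 : pf a b (⟨r, hr⟩, j) = (⟨r, hr⟩, j + 1) := by
              simp only [pf]; rw [hq]; simp [hr2, hq0, hq1, hq2, hqp]
            refine ⟨by rw [h1]; right; exact ⟨rfl, Or.inl rfl⟩, ?_⟩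
            rw [h1]
            have hq' : ((j + 1) - (tnat b r : ZMod b)).val = q + 1 :=
              q_right j _ q (q + 1) hq (by omega) (by omega)
            simp only [pf]; rw [hq']
            simp [hr2, hq0, show ¬ q + 1 = 0 by omega, show ¬ q + 1 = 1 by omega,
              show ¬ q + 1 = 2 by omega, show ¬ (q + 1) % 2 = 1 by omega]
          · -- A7 : left
            have h1 : pf a b (⟨r, hr⟩, j) = (⟨r, hr⟩, j - 1) := by
              simp only [pf]; rw [hq]; simp [hr2, hq0, hq1, hq2, hqp]
            refine ⟨by rw [h1]; right; exact ⟨rfl, Or.inr (by ring)⟩, ?_⟩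
            rw [h1]
            have hq' : ((j - 1) - (tnat b r : ZMod b)).val = q - 1 :=
              q_left (by omega) j _ q (q - 1) hq (by omega) (by omega)
            simp only [pf]; rw [hq']
            simp [hr2, show ¬ q - 1 = 0 by omega, show ¬ q - 1 = 1 by omega,
              show ¬ q - 1 = 2 by omega, show (q - 1) % 2 = 1 by omega]
  · by_cases hq0 : q = 0
    · -- B1 : up
      have h1 : pf a b (⟨r, hr⟩, j) = (⟨r - 1, by omega⟩, j) := by
        simp only [pf]; rw [hq, hq0]; simp [hr2, up]
      refine ⟨by rw [h1]; left; exact ⟨rfl, Or.inr (by simp; omega)⟩, ?_⟩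
      rw [h1]
      have hq' : (j - (tnat b (r - 1) : ZMod b)).val = 2 :=
        qval j (tnat b r) (tnat b (r - 1)) 2 0 1 q 2
          (by rw [tO r hr2, tE (r - 1) (by omega)]; omega) hq (by omega) (by omega)
      simp only [pf]; rw [hq']
      simp [show (r - 1) % 2 = 0 by omega, dn, Prod.ext_iff, Fin.ext_iff]
      omega
    · by_cases hq1 : q = 1
      · by_cases hra : r = a - 1
        · -- B2 : right
          have h1 : pf a b (⟨r, hr⟩, j) = (⟨r, hr⟩, j + 1) := by
            simp only [pf]; rw [hq, hq1]; simp [hr2, hra, show ¬ (a-1) % 2 = 0 by omega]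
          refine ⟨by rw [h1]; right; exact ⟨rfl, Or.inl rfl⟩, ?_⟩
          rw [h1]
          have hq' : ((j + 1) - (tnat b r : ZMod b)).val = 2 :=
            q_right j _ q 2 hq (by omega) (by omega)
          simp only [pf]; rw [hq']; simp [hr2, hra, show ¬ (a-1) % 2 = 0 by omega]
        · -- B3 : down
          have h1 : pf a b (⟨r, hr⟩, j) = (⟨r + 1, by omega⟩, j) := by
            simp only [pf]; rw [hq, hq1]
            simp [hr2, hra, dn, Prod.ext_iff, Fin.ext_iff]
            omega
          refine ⟨by rw [h1]; left; exact ⟨rfl, Or.inl (by simp)⟩, ?_⟩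
          rw [h1]
          have hq' : (j - (tnat b (r + 1) : ZMod b)).val = 0 :=
            qval j (tnat b r) (tnat b (r + 1)) (b - 1) 0 2 q 0
              (by rw [tO r hr2, tE (r + 1) (by omega)]; omega) hq (by omega) (by omega)
          simp only [pf]; rw [hq']
          simp [show (r + 1) % 2 = 0 by omega, show ¬ r + 1 = 0 by omega, up,
            Prod.ext_iff, Fin.ext_iff]
      · by_cases hq2 : q = 2
        · by_cases hra : r = a - 1
          · -- B4 : left
            have h1 : pf a b (⟨r, hr⟩, j) = (⟨r, hr⟩, j - 1) := by
              simp only [pf]; rw [hq, hq2]; simp [hr2, hra, show ¬ (a-1) % 2 = 0 by omega]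
            refine ⟨by rw [h1]; right; exact ⟨rfl, Or.inr (by ring)⟩, ?_⟩
            rw [h1]
            have hq' : ((j - 1) - (tnat b r : ZMod b)).val = 1 :=
              q_left (by omega) j _ q 1 hq (by omega) (by omega)
            simp only [pf]; rw [hq']
            rw [if_neg hr2, if_neg (by norm_num : ¬ (1:ℕ) = 0), if_pos rfl, if_pos hra]
            rw [sub_add_cancel]
          · -- B5 : down
            have h1 : pf a b (⟨r, hr⟩, j) = (⟨r + 1, by omega⟩, j) := by
              simp only [pf]; rw [hq, hq2]
              simp [hr2, hra, dn, Prod.ext_iff, Fin.ext_iff]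
              omega
            refine ⟨by rw [h1]; left; exact ⟨rfl, Or.inl (by simp)⟩, ?_⟩
            rw [h1]
            have hq' : (j - (tnat b (r + 1) : ZMod b)).val = 1 :=
              qval j (tnat b r) (tnat b (r + 1)) (b - 1) 0 2 q 1
                (by rw [tO r hr2, tE (r + 1) (by omega)]; omega) hq (by omega) (by omega)
            simp only [pf]; rw [hq']
            simp [show (r + 1) % 2 = 0 by omega, show ¬ r + 1 = 0 by omega, up,
              Prod.ext_iff, Fin.ext_iff]
        · by_cases hqp : q % 2 = 1
          · -- B6 : right
            have h1 : pf a b (⟨r, hr⟩, j) = (⟨r, hr⟩, j + 1) := by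
              simp only [pf]; rw [hq]; simp [hr2, hq0, hq1, hq2, hqp]
            refine ⟨by rw [h1]; right; exact ⟨rfl, Or.inl rfl⟩, ?_⟩
            rw [h1]
            have hq' : ((j + 1) - (tnat b r : ZMod b)).val = q + 1 :=
              q_right j _ q (q + 1) hq (by omega) (by omega)
            simp only [pf]; rw [hq']
            simp [hr2, hq0, show ¬ q + 1 = 0 by omega, show ¬ q + 1 = 1 by omega,
              show ¬ q + 1 = 2 by omega, show ¬ (q + 1) % 2 = 1 by omega]
          · -- B7 : left
            have h1 : pf a b (⟨r, hr⟩, j) = (⟨r, hr⟩, j - 1) := by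
              simp only [pf]; rw [hq]; simp [hr2, hq0, hq1, hq2, hqp]
            refine ⟨by rw [h1]; right; exact ⟨rfl, Or.inr (by ring)⟩, ?_⟩
            rw [h1]
            have hq' : ((j - 1) - (tnat b r : ZMod b)).val = q - 1 :=
              q_left (by omega) j _ q (q - 1) hq (by omega) (by omega)
            simp only [pf]; rw [hq']
            simp [hr2, show ¬ q - 1 = 0 by omega, show ¬ q - 1 = 1 by omega,
              show ¬ q - 1 = 2 by omega, show (q - 1) % 2 = 1 by omega]

lemma qval_cast (w t c e e' : ℕ) (h : t + c + e * b = w + e' * b) (hc : c < b) :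
    (((w : ℕ) : ZMod b) - (t : ZMod b)).val = c := by
  have h2 : ((w : ℕ) : ZMod b) - (t : ZMod b) = (c : ZMod b) := by
    have h1 : ((t + c + e * b : ℕ) : ZMod b) = ((w + e' * b : ℕ) : ZMod b) := by rw [h]
    push_cast [ZMod.natCast_self] at h1
    have h2' : (t : ZMod b) + (c : ZMod b) = (w : ZMod b) := by linear_combination h1
    rw [← h2']; ring
  rw [h2, ZMod.val_natCast, Nat.mod_eq_of_lt hc]

lemma fault_horiz (ha2 : a % 2 = 0) (ha : 6 ≤ a) (hb2 : b % 2 = 1) (hb : 7 ≤ b)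
    (i : ℕ) (hi : i + 1 < a) (hi' : i < a) :
    ∃ j : ZMod b, pf a b (⟨i, hi'⟩, j) = (⟨i + 1, hi⟩, j) := by
  by_cases hi2 : i % 2 = 0
  · refine ⟨((3 * (i / 2) : ℕ) : ZMod b), ?_⟩
    have hq' : (((3 * (i / 2) : ℕ) : ZMod b) - (tnat b i : ZMod b)).val = 2 :=
      qval_cast _ _ 2 0 1 (by rw [tE i hi2]; omega) (by omega)
    simp only [pf]; rw [hq']
    simp [hi2, dn, Prod.ext_iff, Fin.ext_iff]
    try omega
  · refine ⟨((3 * (i / 2) + 1 : ℕ) : ZMod b), ?_⟩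
    have hq' : (((3 * (i / 2) + 1 : ℕ) : ZMod b) - (tnat b i : ZMod b)).val = 1 :=
      qval_cast _ _ 1 0 0 (by rw [tO i hi2]; try omega) (by omega)
    simp only [pf]; rw [hq']
    simp [hi2, show ¬ i = a - 1 by omega, dn, Prod.ext_iff, Fin.ext_iff]
    try omega

lemma fault_vert (ha2 : a % 2 = 0) (ha : 6 ≤ a) (hb2 : b % 2 = 1) (hb : 7 ≤ b)
    (j : ZMod b) : ∃ (rr : ℕ) (hrr : rr < a), pf a b (⟨rr, hrr⟩, j) = (⟨rr, hrr⟩, j + 1) := by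
  have hv : (j - ((0 : ℕ) : ZMod b)).val = j.val := by simp
  have hvlt : j.val < b := ZMod.val_lt j
  by_cases hp : j.val % 2 = 1
  · refine ⟨0, by omega, ?_⟩
    by_cases hv3 : j.val ≤ b - 3
    · have hq' : (j - (tnat b 0 : ZMod b)).val = j.val + 2 :=
        qval j 0 (tnat b 0) 2 0 1 j.val (j.val + 2)
          (by rw [tE 0 rfl]; omega) hv (by omega) (by omega)
      simp only [pf]; rw [hq']
      simp [show ¬ j = 0 by rintro rfl; simp at hp, show ¬ j.val + 2 = 0 by omega, show ¬ j.val + 2 = 1 by omega,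
        show ¬ j.val + 2 = 2 by omega, show (j.val + 2) % 2 = 1 by omega]
    · have hq' : (j - (tnat b 0 : ZMod b)).val = 0 :=
        qval j 0 (tnat b 0) 2 0 1 j.val 0
          (by rw [tE 0 rfl]; omega) hv (by omega) (by omega)
      simp only [pf]; rw [hq']; simp
  · by_cases hv0 : j.val = 0
    · refine ⟨4, by omega, ?_⟩
      have hq' : (j - (tnat b 4 : ZMod b)).val = b - 4 :=
        qval j 0 (tnat b 4) (b - 4) 0 2 j.val (b - 4)
          (by rw [tE 4 rfl]; omega) hv (by omega) (by omega)
      simp only [pf]; rw [hq']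
      simp [show ¬ b - 4 = 0 by omega, show ¬ b - 4 = 1 by omega,
        show ¬ b - 4 = 2 by omega, show (b - 4) % 2 = 1 by omega]
    · by_cases hv2 : j.val = 2
      · refine ⟨4, by omega, ?_⟩
        have hq' : (j - (tnat b 4 : ZMod b)).val = b - 2 :=
          qval j 0 (tnat b 4) (b - 4) 0 2 j.val (b - 2)
            (by rw [tE 4 rfl]; omega) hv (by omega) (by omega)
        simp only [pf]; rw [hq']
        simp [show ¬ b - 2 = 0 by omega, show ¬ b - 2 = 1 by omega,
          show ¬ b - 2 = 2 by omega, show (b - 2) % 2 = 1 by omega]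
      · refine ⟨2, by omega, ?_⟩
        have hq' : (j - (tnat b 2 : ZMod b)).val = j.val - 1 :=
          qval j 0 (tnat b 2) (b - 1) 0 2 j.val (j.val - 1)
            (by rw [tE 2 rfl]; omega) hv (by omega) (by omega)
        simp only [pf]; rw [hq']
        simp [show ¬ j.val - 1 = 0 by omega, show ¬ j.val - 1 = 1 by omega,
          show ¬ j.val - 1 = 2 by omega, show (j.val - 1) % 2 = 1 by omega]

end Main

end CylFF

/-- For all natural numbers `n` and `m`, the cylindrical board
`(6 + 2 * n)′ × (7 + 2 * m)` admits a fault-free domino tiling. -/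


theorem cyl_faultFree_6'7 :
    ∀ n m : ℕ, cylFaultFreeTileable (6 + 2 * n) (7 + 2 * m) := by
  intro n m
  haveI : NeZero (7 + 2 * m) := ⟨by omega⟩
  set a := 6 + 2 * n with hadef
  set b := 7 + 2 * m with hbdef
  have ha2 : a % 2 = 0 := by omega
  have ha : 6 ≤ a := by omega
  have hb2 : b % 2 = 1 := by omega
  have hb : 7 ≤ b := by omega
  refine ⟨{p | ∃ x, p = s(x, CylFF.pf a b x)}, ⟨?_, ?_⟩, ?_, ?_⟩
  · rintro p ⟨x, rfl⟩
    exact ⟨x, CylFF.pf a b x, (CylFF.pf_good ha2 ha hb2 hb x).1, rfl⟩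
  · intro x
    refine ⟨s(x, CylFF.pf a b x), ⟨⟨x, rfl⟩, Sym2.mem_mk_left _ _⟩, ?_⟩
    rintro p ⟨⟨y, rfl⟩, hx⟩
    rcases Sym2.mem_iff.mp hx with h | h
    · rw [h]
    · rw [h, (CylFF.pf_good ha2 ha hb2 hb y).2, ← h, Sym2.eq_swap]
  · intro i hi
    obtain ⟨j, hj⟩ := CylFF.fault_horiz ha2 ha hb2 hb i hi (by omega)
    exact ⟨(⟨i, by omega⟩, j), (⟨i + 1, hi⟩, j), ⟨_, by rw [hj]⟩, rfl, rfl, rfl⟩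
  · intro j
    obtain ⟨rr, hrr, hpf⟩ := CylFF.fault_vert ha2 ha hb2 hb j
    exact ⟨⟨rr, hrr⟩, ⟨(⟨rr, hrr⟩, j), by rw [hpf]⟩⟩
end

section
/- For all natural numbers n and m, the cylindrical board (8+2n)′×(5+2m) admits a fault-free domino tiling. -/
section Helpers

lemma zval_cast {b : ℕ} [NeZero b] (n : ℕ) (h : n < b) : ((n : ZMod b)).val = n := by
  rw [ZMod.val_natCast, Nat.mod_eq_of_lt h]

lemma zcast_val {b : ℕ} [NeZero b] (x : ZMod b) : ((x.val : ℕ) : ZMod b) = x := by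
  rw [ZMod.natCast_val, ZMod.cast_id]

lemma zval_add_one {b : ℕ} [NeZero b] (x : ZMod b) (h : x.val + 1 < b) : (x + 1).val = x.val + 1 := by
  conv_lhs => rw [← zcast_val x]
  rw [← Nat.cast_one (R := ZMod b), ← Nat.cast_add, zval_cast _ h]

lemma zval_sub_one {b : ℕ} [NeZero b] (x : ZMod b) (h : 1 ≤ x.val) : (x - 1).val = x.val - 1 := by
  have key : ((x.val - 1 : ℕ) : ZMod b) = x - 1 := by
    have h2 : ((x.val - 1 + 1 : ℕ) : ZMod b) = x := by
      rw [show x.val - 1 + 1 = x.val from by omega, zcast_val]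
    rw [Nat.cast_add, Nat.cast_one] at h2
    linear_combination h2
  rw [← key, zval_cast _ (by have := x.val_lt; omega)]

lemma zrepr {b : ℕ} [NeZero b] (j : ZMod b) (e : ℕ) :
    j = (e : ZMod b) + (((j - (e : ZMod b)).val : ℕ) : ZMod b) := by
  rw [zcast_val]; ring

lemma zval_of_repr {b : ℕ} [NeZero b] (j : ZMod b) (e n : ℕ) (h : n < b)
    (hj : j = (e : ZMod b) + (n : ZMod b)) : (j - (e : ZMod b)).val = n := by
  rw [hj, add_sub_cancel_left, zval_cast _ h]

lemma zadd_trans {b : ℕ} [NeZero b] (e n e' n' : ℕ) (h : (e + n) % b = (e' + n') % b) :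
    (e : ZMod b) + (n : ZMod b) = (e' : ZMod b) + (n' : ZMod b) := by
  rw [← Nat.cast_add, ← Nat.cast_add, ← ZMod.natCast_mod (e + n) b,
    ← ZMod.natCast_mod (e' + n') b, h]

end Helpers

/-- partner function for the fault-free tiling -/
def prow (a : ℕ) {b : ℕ} (i : ℕ) (j : ZMod b) : ℕ × ZMod b :=
  if i % 2 = 0 then
    if i = 0 then
      if j = 0 then (1, j)
      else if j.val % 2 = 1 then (0, j + 1) else (0, j - 1)
    else
      if (j - ((3 * (i / 2) - 2 : ℕ) : ZMod b)).val ≤ 1 then (i - 1, j)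
      else if (j - ((3 * (i / 2) - 2 : ℕ) : ZMod b)).val = 2 then (i + 1, j)
      else if (j - ((3 * (i / 2) - 2 : ℕ) : ZMod b)).val % 2 = 1 then (i, j + 1)
      else (i, j - 1)
  else
    if (j - ((3 * (i / 2) : ℕ) : ZMod b)).val = 0 then (i - 1, j)
    else if i + 1 = a ∨ 3 ≤ (j - ((3 * (i / 2) : ℕ) : ZMod b)).val then
      (if (j - ((3 * (i / 2) : ℕ) : ZMod b)).val % 2 = 1 then (i, j + 1) else (i, j - 1))
    else (i + 1, j)

lemma prow_lt (a : ℕ) {b : ℕ} (ha8 : 8 ≤ a) (ha2 : a % 2 = 0) (i : ℕ) (hi : i < a)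
    (j : ZMod b) : (prow a i j).1 < a := by
  unfold prow
  split_ifs <;> dsimp only <;> omega


lemma prow_spec {a b : ℕ} [NeZero b] (hb5 : 5 ≤ b) (hb2 : b % 2 = 1)
    (ha8 : 8 ≤ a) (ha2 : a % 2 = 0) (i : ℕ) (hi : i < a) (j : ZMod b) :
    prow a (prow a i j).1 (prow a i j).2 = (i, j) ∧
    prow a i j ≠ (i, j) ∧
    (((prow a i j).2 = j ∧ (i + 1 = (prow a i j).1 ∨ (prow a i j).1 + 1 = i)) ∨
     ((prow a i j).1 = i ∧ ((prow a i j).2 = j + 1 ∨ j = (prow a i j).2 + 1))) := by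
  have hone : ∀ x : ZMod b, x + 1 ≠ x := by
    intro x h
    have h1 : (1 : ZMod b) = 0 := by linear_combination h
    have h2 : ((1 : ℕ) : ZMod b).val = 1 := zval_cast 1 (by omega)
    rw [Nat.cast_one, h1, ZMod.val_zero] at h2
    omega
  by_cases hpar : i % 2 = 0
  · by_cases h0 : i = 0
    · subst h0
      by_cases hj : j = 0
      · -- case A
        have e1 : prow a 0 j = (1, j) := by
          unfold prow; rw [if_pos rfl, if_pos rfl, if_pos hj]
        have e2 : prow a 1 j = (0, j) := by
          unfold prow
          rw [if_neg (by omega)]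
          have hd : (j - ((3 * (1 / 2) : ℕ) : ZMod b)).val = 0 := by
            subst hj; norm_num
          rw [hd, if_pos rfl]
        refine ⟨by rw [e1]; exact e2, ?_, ?_⟩
        · rw [e1]; intro h; have h2 := congrArg Prod.fst h; simp only at h2; omega
        · rw [e1]; exact Or.inl ⟨rfl, Or.inl rfl⟩
      · have hv0 : j.val ≠ 0 := fun h => hj ((ZMod.val_eq_zero j).mp h)
        by_cases hv : j.val % 2 = 1
        · -- case B
          have e1 : prow a 0 j = (0, j + 1) := by
            unfold prow; rw [if_pos rfl, if_pos rfl, if_neg hj, if_pos hv]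
          have hv1 : (j + 1).val = j.val + 1 :=
            zval_add_one j (by have := j.val_lt; omega)
          have e2 : prow a 0 (j + 1) = (0, j) := by
            unfold prow
            rw [if_pos rfl, if_pos rfl,
              if_neg (fun h => by rw [h, ZMod.val_zero] at hv1; omega),
              if_neg (by rw [hv1]; omega), add_sub_cancel_right]
          refine ⟨by rw [e1]; exact e2, ?_, ?_⟩
          · rw [e1]; intro h; exact hone j (congrArg Prod.snd h)
          · rw [e1]; exact Or.inr ⟨rfl, Or.inl rfl⟩
        · -- case C
          have e1 : prow a 0 j = (0, j - 1) := by
            unfold prow; rw [if_pos rfl, if_pos rfl, if_neg hj, if_neg hv]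
          have hv1 : (j - 1).val = j.val - 1 := zval_sub_one j (by omega)
          have e2 : prow a 0 (j - 1) = (0, j) := by
            unfold prow
            rw [if_pos rfl, if_pos rfl,
              if_neg (fun h => by rw [h, ZMod.val_zero] at hv1; omega),
              if_pos (by rw [hv1]; omega), sub_add_cancel]
          refine ⟨by rw [e1]; exact e2, ?_, ?_⟩
          · rw [e1]; intro h; have h2 := congrArg Prod.snd h; simp only at h2
            exact hone (j - 1) (by rw [sub_add_cancel]; exact h2.symm)
          · rw [e1]; exact Or.inr ⟨rfl, Or.inr (by rw [sub_add_cancel])⟩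
    · -- i even, ≥ 2
      set k := i / 2 with hkdef
      have hik : i = 2 * k := by omega
      have hk1 : 1 ≤ k := by omega
      set d := (j - ((3 * k - 2 : ℕ) : ZMod b)).val with hddef
      have hdb : d < b := ZMod.val_lt _
      have hjr : j = ((3 * k - 2 : ℕ) : ZMod b) + (d : ℕ) := zrepr j _
      by_cases hd1 : d ≤ 1
      · -- case 4 : up
        have e1 : prow a i j = (i - 1, j) := by
          unfold prow; rw [if_pos hpar, if_neg h0, if_pos hd1]
        have e2 : prow a (i - 1) j = (i, j) := by
          unfold prow
          rw [if_neg (by omega), show 3 * ((i - 1) / 2) = 3 * (k - 1) from by omega]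
          have hd' : (j - ((3 * (k - 1) : ℕ) : ZMod b)).val = d + 1 := by
            refine zval_of_repr j _ _ (by omega) ?_
            rw [hjr]; exact zadd_trans _ _ _ _ (by rw [show 3*k-2+d = 3*(k-1)+(d+1) from by omega])
          rw [hd', if_neg (by omega), if_neg (by rintro (h | h) <;> omega),
            show i - 1 + 1 = i from by omega]
        refine ⟨by rw [e1]; exact e2, ?_, ?_⟩
        · rw [e1]; intro h; have h2 := congrArg Prod.fst h; simp only at h2; omega
        · rw [e1]; exact Or.inl ⟨rfl, Or.inr (by simp only; omega)⟩
      · by_cases hd2 : d = 2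
        · -- case 5 : down
          have e1 : prow a i j = (i + 1, j) := by
            unfold prow; rw [if_pos hpar, if_neg h0, if_neg hd1, if_pos hd2]
          have e2 : prow a (i + 1) j = (i, j) := by
            unfold prow
            rw [if_neg (by omega), show 3 * ((i + 1) / 2) = 3 * k from by omega]
            have hd' : (j - ((3 * k : ℕ) : ZMod b)).val = 0 := by
              refine zval_of_repr j _ _ (by omega) ?_
              rw [hjr, hd2]; exact zadd_trans _ _ _ _ (by rw [show 3*k-2+2 = 3*k+0 from by omega])
            rw [hd', if_pos rfl, show i + 1 - 1 = i from by omega]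
          refine ⟨by rw [e1]; exact e2, ?_, ?_⟩
          · rw [e1]; intro h; have h2 := congrArg Prod.fst h; simp only at h2; omega
          · rw [e1]; exact Or.inl ⟨rfl, Or.inl rfl⟩
        · by_cases hdo : d % 2 = 1
          · -- case 6 : right
            have hd3 : 3 ≤ d := by omega
            have e1 : prow a i j = (i, j + 1) := by
              unfold prow; rw [if_pos hpar, if_neg h0, if_neg hd1, if_neg hd2, if_pos hdo]
            have e2 : prow a i (j + 1) = (i, j) := by
              unfold prow
              rw [if_pos hpar, if_neg h0]
              have hd' : ((j + 1) - ((3 * k - 2 : ℕ) : ZMod b)).val = d + 1 := by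
                refine zval_of_repr _ _ _ (by omega) ?_
                rw [hjr]; push_cast; ring
              rw [hd', if_neg (by omega), if_neg (by omega), if_neg (by omega),
                add_sub_cancel_right]
            refine ⟨by rw [e1]; exact e2, ?_, ?_⟩
            · rw [e1]; intro h; exact hone j (congrArg Prod.snd h)
            · rw [e1]; exact Or.inr ⟨rfl, Or.inl rfl⟩
          · -- case 7 : left
            have hd4 : 4 ≤ d := by omega
            have e1 : prow a i j = (i, j - 1) := by
              unfold prow; rw [if_pos hpar, if_neg h0, if_neg hd1, if_neg hd2, if_neg hdo]
            have e2 : prow a i (j - 1) = (i, j) := by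
              unfold prow
              rw [if_pos hpar, if_neg h0]
              have hd' : ((j - 1) - ((3 * k - 2 : ℕ) : ZMod b)).val = d - 1 := by
                refine zval_of_repr _ _ _ (by omega) ?_
                rw [hjr]
                rw [show ((d:ℕ) : ZMod b) = (((d - 1 : ℕ)) : ZMod b) + 1 from by
                  rw [← Nat.cast_one (R := ZMod b), ← Nat.cast_add, show d - 1 + 1 = d from by omega]]
                ring
              rw [hd', if_neg (by omega), if_neg (by omega), if_pos (by omega), sub_add_cancel]
            refine ⟨by rw [e1]; exact e2, ?_, ?_⟩
            · rw [e1]; intro h; have h2 := congrArg Prod.snd h; simp only at h2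
              exact hone (j - 1) (by rw [sub_add_cancel]; exact h2.symm)
            · rw [e1]; exact Or.inr ⟨rfl, Or.inr (by rw [sub_add_cancel])⟩
  · -- i odd
    set k := i / 2 with hkdef
    have hik : i = 2 * k + 1 := by omega
    set d := (j - ((3 * k : ℕ) : ZMod b)).val with hddef
    have hdb : d < b := ZMod.val_lt _
    have hjr : j = ((3 * k : ℕ) : ZMod b) + (d : ℕ) := zrepr j _
    by_cases hd0 : d = 0
    · -- case 8/9 : up
      have e1 : prow a i j = (i - 1, j) := by
        unfold prow; rw [if_neg hpar, if_pos hd0]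
      have hj3k : j = ((3 * k : ℕ) : ZMod b) := by rw [hjr, hd0]; simp
      have e2 : prow a (i - 1) j = (i, j) := by
        by_cases hi1 : i = 1
        · have hk0 : k = 0 := by omega
          rw [hi1]
          unfold prow
          rw [if_pos (by norm_num), if_pos rfl, if_pos (by rw [hj3k, hk0]; simp)]
        · have hk1 : 1 ≤ k := by omega
          unfold prow
          rw [if_pos (by omega), if_neg (by omega),
            show 3 * ((i - 1) / 2) - 2 = 3 * k - 2 from by omega]
          have hd' : (j - ((3 * k - 2 : ℕ) : ZMod b)).val = 2 := by
            refine zval_of_repr j _ _ (by omega) ?_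
            rw [hj3k]
            have h3 := zadd_trans (b := b) (3 * k) 0 (3 * k - 2) 2
              (by rw [show 3*k+0 = 3*k-2+2 from by omega])
            rw [Nat.cast_zero, add_zero] at h3
            exact h3
          rw [hd', if_neg (by omega), if_pos rfl, show i - 1 + 1 = i from by omega]
      refine ⟨by rw [e1]; exact e2, ?_, ?_⟩
      · rw [e1]; intro h; have h2 := congrArg Prod.fst h; simp only at h2; omega
      · rw [e1]; exact Or.inl ⟨rfl, Or.inr (by simp only; omega)⟩
    · by_cases hcond : i + 1 = a ∨ 3 ≤ d
      · by_cases hdo : d % 2 = 1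
        · -- case 10 : right
          have e1 : prow a i j = (i, j + 1) := by
            unfold prow; rw [if_neg hpar, if_neg hd0, if_pos hcond, if_pos hdo]
          have e2 : prow a i (j + 1) = (i, j) := by
            unfold prow
            rw [if_neg hpar]
            have hd' : ((j + 1) - ((3 * k : ℕ) : ZMod b)).val = d + 1 := by
              refine zval_of_repr _ _ _ (by omega) ?_
              rw [hjr]; push_cast; ring
            rw [hd', if_neg (by omega),
              if_pos (by rcases hcond with h | h; exact Or.inl h; exact Or.inr (by omega)),
              if_neg (by omega), add_sub_cancel_right]
          refine ⟨by rw [e1]; exact e2, ?_, ?_⟩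
          · rw [e1]; intro h; exact hone j (congrArg Prod.snd h)
          · rw [e1]; exact Or.inr ⟨rfl, Or.inl rfl⟩
        · -- case 11 : left
          have hd2 : 2 ≤ d := by omega
          have e1 : prow a i j = (i, j - 1) := by
            unfold prow; rw [if_neg hpar, if_neg hd0, if_pos hcond, if_neg hdo]
          have e2 : prow a i (j - 1) = (i, j) := by
            unfold prow
            rw [if_neg hpar]
            have hd' : ((j - 1) - ((3 * k : ℕ) : ZMod b)).val = d - 1 := by
              refine zval_of_repr _ _ _ (by omega) ?_
              rw [hjr]
              rw [show ((d:ℕ) : ZMod b) = (((d - 1 : ℕ)) : ZMod b) + 1 from by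
                rw [← Nat.cast_one (R := ZMod b), ← Nat.cast_add, show d - 1 + 1 = d from by omega]]
              ring
            rw [hd', if_neg (by omega),
              if_pos (by rcases hcond with h | h; exact Or.inl h; exact Or.inr (by omega)),
              if_pos (by omega), sub_add_cancel]
          refine ⟨by rw [e1]; exact e2, ?_, ?_⟩
          · rw [e1]; intro h; have h2 := congrArg Prod.snd h; simp only at h2
            exact hone (j - 1) (by rw [sub_add_cancel]; exact h2.symm)
          · rw [e1]; exact Or.inr ⟨rfl, Or.inr (by rw [sub_add_cancel])⟩
      · -- case 12 : down
        have hd12 : d = 1 ∨ d = 2 := by omega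
        have e1 : prow a i j = (i + 1, j) := by
          unfold prow; rw [if_neg hpar, if_neg hd0, if_neg hcond]
        have e2 : prow a (i + 1) j = (i, j) := by
          unfold prow
          rw [if_pos (by omega), if_neg (by omega),
            show 3 * ((i + 1) / 2) - 2 = 3 * k + 1 from by omega]
          have hd' : (j - ((3 * k + 1 : ℕ) : ZMod b)).val = d - 1 := by
            refine zval_of_repr j _ _ (by omega) ?_
            rw [hjr]; exact zadd_trans _ _ _ _ (by rw [show 3*k+d = 3*k+1+(d-1) from by omega])
          rw [hd', if_pos (by omega), show i + 1 - 1 = i from by omega]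
        refine ⟨by rw [e1]; exact e2, ?_, ?_⟩
        · rw [e1]; intro h; have h2 := congrArg Prod.fst h; simp only at h2; omega
        · rw [e1]; exact Or.inl ⟨rfl, Or.inl rfl⟩

lemma zrepr2 {b : ℕ} [NeZero b] (j : ZMod b) (e n : ℕ) (h : (e + n) % b = j.val) :
    j = (e : ZMod b) + (n : ZMod b) := by
  conv_lhs => rw [← zcast_val j]
  rw [← Nat.cast_add, ← ZMod.natCast_mod (e + n) b, h]

section Witness

variable {a b : ℕ} [NeZero b]

lemma prow_W1 : prow a 0 (0 : ZMod b) = (1, 0) := by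
  unfold prow; rw [if_pos rfl, if_pos rfl, if_pos rfl]

lemma prow_W2 (hb5 : 5 ≤ b) (i : ℕ) (hpar : i % 2 = 0) (h0 : i ≠ 0) :
    prow a i ((3 * (i / 2) : ℕ) : ZMod b) = (i + 1, ((3 * (i / 2) : ℕ) : ZMod b)) := by
  unfold prow
  have hd : (((3 * (i / 2) : ℕ) : ZMod b) - ((3 * (i / 2) - 2 : ℕ) : ZMod b)).val = 2 := by
    refine zval_of_repr _ _ _ (by omega) (zrepr2 _ _ _ ?_)
    rw [ZMod.val_natCast, show 3 * (i / 2) - 2 + 2 = 3 * (i / 2) from by omega]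
  rw [if_pos hpar, if_neg h0, hd, if_neg (by omega), if_pos rfl]

lemma prow_W3 (hb5 : 5 ≤ b) (i : ℕ) (hpar : ¬ i % 2 = 0) (hia : ¬ i + 1 = a) :
    prow a i ((3 * (i / 2) + 1 : ℕ) : ZMod b) = (i + 1, ((3 * (i / 2) + 1 : ℕ) : ZMod b)) := by
  unfold prow
  have hd : (((3 * (i / 2) + 1 : ℕ) : ZMod b) - ((3 * (i / 2) : ℕ) : ZMod b)).val = 1 := by
    refine zval_of_repr _ _ _ (by omega) (zrepr2 _ _ _ ?_)
    rw [ZMod.val_natCast]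
  rw [if_neg hpar, hd, if_neg (by omega), if_neg (by rintro (h | h) <;> omega)]

lemma prow_V0 (j : ZMod b) (hv : j.val % 2 = 1) : prow a 0 j = (0, j + 1) := by
  unfold prow
  rw [if_pos rfl, if_pos rfl,
    if_neg (fun h => by rw [h, ZMod.val_zero] at hv; omega), if_pos hv]

lemma prow_V2 (j : ZMod b) (hv : j.val % 2 = 0) (hv4 : 4 ≤ j.val) :
    prow a 2 j = (2, j + 1) := by
  unfold prow
  have hd : (j - ((3 * (2 / 2) - 2 : ℕ) : ZMod b)).val = j.val - 1 := by
    refine zval_of_repr _ _ _ (by have := j.val_lt; omega) (zrepr2 _ _ _ ?_)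
    rw [show 3 * (2 / 2) - 2 + (j.val - 1) = j.val from by omega,
      Nat.mod_eq_of_lt j.val_lt]
  rw [if_pos rfl, if_neg (by omega), hd, if_neg (by omega), if_neg (by omega),
    if_pos (by omega)]

lemma prow_V4 (hb7 : 7 ≤ b) (hb2 : b % 2 = 1) (j : ZMod b) (hv : j.val = 0) :
    prow a 4 j = (4, j + 1) := by
  unfold prow
  have hd : (j - ((3 * (4 / 2) - 2 : ℕ) : ZMod b)).val = b - 4 := by
    refine zval_of_repr _ _ _ (by omega) (zrepr2 _ _ _ ?_)
    rw [show 3 * (4 / 2) - 2 + (b - 4) = b from by omega, Nat.mod_self, hv]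
  rw [if_pos rfl, if_neg (by omega), hd, if_neg (by omega), if_neg (by omega),
    if_pos (by omega)]

lemma prow_V5 (hb7 : 7 ≤ b) (hb2 : b % 2 = 1) (j : ZMod b) (hv : j.val = 2) :
    prow a 5 j = (5, j + 1) := by
  unfold prow
  have hd : (j - ((3 * (5 / 2) : ℕ) : ZMod b)).val = b - 4 := by
    refine zval_of_repr _ _ _ (by omega) (zrepr2 _ _ _ ?_)
    rw [show 3 * (5 / 2) + (b - 4) = b + 2 from by omega, Nat.add_mod_left,
      Nat.mod_eq_of_lt (by omega), hv]
  rw [if_neg (by omega), hd, if_neg (by omega), if_pos (Or.inr (by omega)),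
    if_pos (by omega)]

lemma prow_V6 (hb : b = 5) (j : ZMod b) (hv : j.val = 0) :
    prow a 6 j = (6, j + 1) := by
  unfold prow
  have hd : (j - ((3 * (6 / 2) - 2 : ℕ) : ZMod b)).val = 3 := by
    refine zval_of_repr _ _ _ (by omega) (zrepr2 _ _ _ ?_)
    subst hb; rw [hv]
  rw [if_pos rfl, if_neg (by omega), hd, if_neg (by omega), if_neg (by omega),
    if_pos (by omega)]

lemma prow_V7 (hb : b = 5) (j : ZMod b) (hv : j.val = 2) :
    prow a 7 j = (7, j + 1) := by
  unfold prow
  have hd : (j - ((3 * (7 / 2) : ℕ) : ZMod b)).val = 3 := by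
    refine zval_of_repr _ _ _ (by omega) (zrepr2 _ _ _ ?_)
    subst hb; rw [hv]
  rw [if_neg (by omega), hd, if_neg (by omega), if_pos (Or.inr (by omega)),
    if_pos (by omega)]

end Witness
lemma cyl_main (a b : ℕ) (hb5 : 5 ≤ b) (hb2 : b % 2 = 1) (ha8 : 8 ≤ a) (ha2 : a % 2 = 0) :
    cylFaultFreeTileable a b := by
  haveI : NeZero b := ⟨by omega⟩
  -- the partner function on cells
  let pf : Fin a × ZMod b → Fin a × ZMod b := fun x =>
    (⟨(prow a x.1.val x.2).1, prow_lt a ha8 ha2 x.1.val x.1.isLt x.2⟩, (prow a x.1.val x.2).2)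
  have hpf_eq : ∀ (x : Fin a × ZMod b) (r : ℕ) (hr : r < a) (j' : ZMod b),
      prow a x.1.val x.2 = (r, j') → pf x = (⟨r, hr⟩, j') := by
    intro x r hr j' h
    have h1 := congrArg Prod.fst h
    have h2 := congrArg Prod.snd h
    exact Prod.ext (Fin.ext h1) h2
  have hinv : ∀ x, pf (pf x) = x := by
    intro x
    obtain ⟨h1, -, -⟩ := prow_spec hb5 hb2 ha8 ha2 x.1.val x.1.isLt x.2
    have := hpf_eq (pf x) x.1.val x.1.isLt x.2 h1
    rw [this]
  have hne : ∀ x, pf x ≠ x := by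
    intro x h
    obtain ⟨-, h2, -⟩ := prow_spec hb5 hb2 ha8 ha2 x.1.val x.1.isLt x.2
    apply h2
    have h1 := congrArg (fun y : Fin a × ZMod b => (y.1.val : ℕ)) h
    have h3 := congrArg Prod.snd h
    exact Prod.ext h1 h3
  have hadj : ∀ x, cylAdj a b x (pf x) := by
    intro x
    obtain ⟨-, -, h3⟩ := prow_spec hb5 hb2 ha8 ha2 x.1.val x.1.isLt x.2
    rcases h3 with ⟨hc, hr⟩ | ⟨hr, hc⟩
    · exact Or.inl ⟨hc.symm, hr⟩
    · exact Or.inr ⟨(Fin.ext hr).symm, hc⟩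
  refine ⟨{p | ∃ x, p = s(x, pf x)}, ⟨?_, ?_⟩, ?_, ?_⟩
  · rintro p ⟨x, rfl⟩
    exact ⟨x, pf x, hadj x, rfl⟩
  · intro x
    refine ⟨s(x, pf x), ⟨⟨x, rfl⟩, by rw [Sym2.mem_iff]; exact Or.inl rfl⟩, ?_⟩
    rintro q ⟨⟨y, rfl⟩, hy⟩
    rw [Sym2.mem_iff] at hy
    rcases hy with rfl | rfl
    · rfl
    · have : pf (pf y) = y := hinv y
      rw [show s(y, pf y) = s(pf y, pf (pf y)) from by rw [this, Sym2.eq_swap]]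
  · -- horizontal fault-lines
    intro i hia
    by_cases hpar : i % 2 = 0
    · by_cases h0 : i = 0
      · subst h0
        refine ⟨(⟨0, by omega⟩, (0 : ZMod b)), (⟨1, by omega⟩, (0 : ZMod b)), ⟨?_, rfl, rfl, rfl⟩⟩
        exact ⟨(⟨0, by omega⟩, (0 : ZMod b)),
          by rw [hpf_eq (⟨0, by omega⟩, (0 : ZMod b)) 1 (by omega) 0 prow_W1]⟩
      · refine ⟨(⟨i, by omega⟩, ((3 * (i / 2) : ℕ) : ZMod b)),
          (⟨i + 1, by omega⟩, ((3 * (i / 2) : ℕ) : ZMod b)), ⟨?_, rfl, rfl, rfl⟩⟩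
        exact ⟨(⟨i, by omega⟩, ((3 * (i / 2) : ℕ) : ZMod b)),
          by rw [hpf_eq _ (i + 1) (by omega) _ (prow_W2 hb5 i hpar h0)]⟩
    · refine ⟨(⟨i, by omega⟩, ((3 * (i / 2) + 1 : ℕ) : ZMod b)),
        (⟨i + 1, by omega⟩, ((3 * (i / 2) + 1 : ℕ) : ZMod b)), ⟨?_, rfl, rfl, rfl⟩⟩
      exact ⟨(⟨i, by omega⟩, ((3 * (i / 2) + 1 : ℕ) : ZMod b)),
        by rw [hpf_eq _ (i + 1) (by omega) _ (prow_W3 hb5 i hpar (by omega))]⟩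
  · -- vertical fault-lines
    intro j
    by_cases hv : j.val % 2 = 1
    · exact ⟨⟨0, by omega⟩, (⟨0, by omega⟩, j),
        by rw [hpf_eq (⟨0, by omega⟩, j) 0 (by omega) (j + 1) (prow_V0 j hv)]⟩
    · by_cases hv4 : 4 ≤ j.val
      · exact ⟨⟨2, by omega⟩, (⟨2, by omega⟩, j),
          by rw [hpf_eq (⟨2, by omega⟩, j) 2 (by omega) (j + 1) (prow_V2 j (by omega) hv4)]⟩
      · rcases (show b = 5 ∨ 7 ≤ b from by omega) with hb | hb
        · by_cases hv0 : j.val = 0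
          · exact ⟨⟨6, by omega⟩, (⟨6, by omega⟩, j),
              by rw [hpf_eq (⟨6, by omega⟩, j) 6 (by omega) (j + 1) (prow_V6 hb j hv0)]⟩
          · have hv2 : j.val = 2 := by omega
            exact ⟨⟨7, by omega⟩, (⟨7, by omega⟩, j),
              by rw [hpf_eq (⟨7, by omega⟩, j) 7 (by omega) (j + 1) (prow_V7 hb j hv2)]⟩
        · by_cases hv0 : j.val = 0
          · exact ⟨⟨4, by omega⟩, (⟨4, by omega⟩, j),
              by rw [hpf_eq (⟨4, by omega⟩, j) 4 (by omega) (j + 1) (prow_V4 hb hb2 j hv0)]⟩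
          · have hv2 : j.val = 2 := by omega
            exact ⟨⟨5, by omega⟩, (⟨5, by omega⟩, j),
              by rw [hpf_eq (⟨5, by omega⟩, j) 5 (by omega) (j + 1) (prow_V5 hb hb2 j hv2)]⟩


/-- For all natural numbers `n` and `m`, the cylindrical board
`(8 + 2 * n)′ × (5 + 2 * m)` admits a fault-free domino tiling. -/
theorem cyl_faultFree_8'5 :
    ∀ n m : ℕ, cylFaultFreeTileable (8 + 2 * n) (5 + 2 * m) := by
  intro n m
  exact cyl_main _ _ (by omega) (by omega) (by omega) (by omega)
end

section
/- For all natural numbers n and m, the cylindrical board (5+2n)′×(8+2m) admits a fault-free domino tiling. -/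
namespace CylFF

/-- rows crossing the vertical cut between column `v` and `v+1` -/
def Rp (a : ℕ) : ℕ → ℕ → Prop
  | 0, i => i = a-2 ∨ i = a-1
  | 1, i => i = a-3
  | 2, i => i = a-2 ∨ i = a-1
  | 3, i => i = 0
  | 4, i => i = 1 ∨ i = a-1
  | 5, i => i = 0
  | v+6, i => ((v+6) % 2 = 0 ∧ (i = 1 ∨ i = 2)) ∨ ((v+6) % 2 = 1 ∧ i = 0)

def nxt (b v : ℕ) : ℕ := if v + 1 = b then 0 else v + 1

def prv (b : ℕ) : ℕ → ℕ
  | 0 => b - 1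
  | w + 1 => w

def sOff : ℕ → ℕ
  | 0 => 1 | 1 => 0 | 2 => 0 | 3 => 1 | 4 => 2 | 5 => 2 | _ => 3

def vp (v i : ℕ) : ℕ := if (i - sOff v) % 2 = 0 then i + 1 else i - 1

open Classical in
noncomputable def gc (a b v i : ℕ) : ℕ :=
  if Rp a v i then nxt b v else if Rp a (prv b v) i then prv b v else v

open Classical in
noncomputable def gr (a b v i : ℕ) : ℕ :=
  if Rp a v i then i else if Rp a (prv b v) i then i else vp v i

section
variable {a b v i : ℕ}

lemma vcases (v : ℕ) : v = 0 ∨ v = 1 ∨ v = 2 ∨ v = 3 ∨ v = 4 ∨ v = 5 ∨ v = 6 ∨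
    ∃ k, v = k + 7 := by
  rcases Nat.lt_or_ge v 7 with h | h
  · interval_cases v <;> simp
  · exact Or.inr <| Or.inr <| Or.inr <| Or.inr <| Or.inr <| Or.inr <| Or.inr ⟨v - 7, by omega⟩

lemma Rp_ge6 (hv : 6 ≤ v) : Rp a v i ↔
    ((v % 2 = 0 ∧ (i = 1 ∨ i = 2)) ∨ (v % 2 = 1 ∧ i = 0)) := by
  obtain ⟨k, rfl⟩ : ∃ k, v = k + 6 := ⟨v - 6, by omega⟩
  exact Iff.rfl

lemma Rp0 : Rp a 0 i ↔ (i = a-2 ∨ i = a-1) := Iff.rfl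
lemma Rp1 : Rp a 1 i ↔ i = a-3 := Iff.rfl
lemma Rp2 : Rp a 2 i ↔ (i = a-2 ∨ i = a-1) := Iff.rfl
lemma Rp3 : Rp a 3 i ↔ i = 0 := Iff.rfl
lemma Rp4 : Rp a 4 i ↔ (i = 1 ∨ i = a-1) := Iff.rfl
lemma Rp5 : Rp a 5 i ↔ i = 0 := Iff.rfl
lemma sOff0 : sOff 0 = 1 := rfl
lemma sOff1 : sOff 1 = 0 := rfl
lemma sOff4 : sOff 4 = 2 := rfl
lemma sOff6 : sOff 6 = 3 := rfl

lemma sOff_char (v : ℕ) : (v = 0 ∧ sOff v = 1) ∨ (v = 1 ∧ sOff v = 0) ∨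
    (v = 2 ∧ sOff v = 0) ∨ (v = 3 ∧ sOff v = 1) ∨ (v = 4 ∧ sOff v = 2) ∨
    (v = 5 ∧ sOff v = 2) ∨ (6 ≤ v ∧ sOff v = 3) := by
  obtain rfl|rfl|rfl|rfl|rfl|rfl|rfl|⟨k,rfl⟩ := vcases v <;> simp [sOff] <;> omega

lemma prv_char (b v : ℕ) : (v = 0 ∧ prv b v = b - 1) ∨ (1 ≤ v ∧ prv b v + 1 = v) := by
  cases v with
  | zero => exact Or.inl ⟨rfl, rfl⟩
  | succ w => exact Or.inr ⟨by omega, rfl⟩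

lemma nxt_lt (hb : 0 < b) (hv : v < b) : nxt b v < b := by unfold nxt; split_ifs <;> omega

lemma prv_lt (hb : 0 < b) (hv : v < b) : prv b v < b := by
  have := prv_char b v; omega

lemma prv_nxt (hv : v < b) : prv b (nxt b v) = v := by
  unfold nxt
  by_cases h : v + 1 = b
  · rw [if_pos h]; simp only [prv]; omega
  · rw [if_neg h]; simp only [prv]

lemma nxt_prv (hb : 0 < b) (hv : v < b) : nxt b (prv b v) = v := by
  have := prv_char b v
  unfold nxt; split_ifs <;> omega

lemma sOff_le : sOff v ≤ 3 := by have := sOff_char v; omega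

lemma nxt_small (h : v + 1 < b) : nxt b v = v + 1 := if_neg (by omega)

lemma notRp_nxt (ha5 : 5 ≤ a) (hb8 : 8 ≤ b) (hb : b % 2 = 0) (hv : v < b)
    (h : Rp a v i) : ¬ Rp a (nxt b v) i := by
  obtain rfl|rfl|rfl|rfl|rfl|rfl|rfl|⟨k,rfl⟩ := vcases v
  · rw [nxt_small (by omega), Rp1]; rw [Rp0] at h; omega
  · rw [nxt_small (by omega), Rp2]; rw [Rp1] at h; omega
  · rw [nxt_small (by omega), Rp3]; rw [Rp2] at h; omega
  · rw [nxt_small (by omega), Rp4]; rw [Rp3] at h; omega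
  · rw [nxt_small (by omega), Rp5]; rw [Rp4] at h; omega
  · rw [nxt_small (by omega), Rp_ge6 (by omega)]; rw [Rp5] at h; omega
  · rw [nxt_small (by omega), Rp_ge6 (by omega)]
    rw [Rp_ge6 (by omega)] at h; omega
  · rw [Rp_ge6 (by omega)] at h
    by_cases hc : k + 7 + 1 = b
    · have hn : nxt b (k+7) = 0 := if_pos hc
      rw [hn, Rp0]; omega
    · rw [nxt_small (by omega), Rp_ge6 (by omega)]; omega

lemma region_of (ha5 : 5 ≤ a) (hb8 : 8 ≤ b) (hb : b % 2 = 0) (hv : v < b) (hi : i < a)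
    (h1 : ¬ Rp a v i) (h2 : ¬ Rp a (prv b v) i) : sOff v ≤ i ∧ i + 4 ≤ sOff v + a := by
  obtain rfl|rfl|rfl|rfl|rfl|rfl|rfl|⟨k,rfl⟩ := vcases v
  · have hp : prv b 0 = b - 1 := rfl
    rw [hp, Rp_ge6 (by omega)] at h2
    rw [Rp0] at h1; have hs : sOff 0 = 1 := rfl; rw [hs]; omega
  · have hp : prv b 1 = 0 := rfl
    rw [hp, Rp0] at h2; rw [Rp1] at h1; have hs : sOff 1 = 0 := rfl; rw [hs]; omega
  · have hp : prv b 2 = 1 := rfl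
    rw [hp, Rp1] at h2; rw [Rp2] at h1; have hs : sOff 2 = 0 := rfl; rw [hs]; omega
  · have hp : prv b 3 = 2 := rfl
    rw [hp, Rp2] at h2; rw [Rp3] at h1; have hs : sOff 3 = 1 := rfl; rw [hs]; omega
  · have hp : prv b 4 = 3 := rfl
    rw [hp, Rp3] at h2; rw [Rp4] at h1; have hs : sOff 4 = 2 := rfl; rw [hs]; omega
  · have hp : prv b 5 = 4 := rfl
    rw [hp, Rp4] at h2; rw [Rp5] at h1; have hs : sOff 5 = 2 := rfl; rw [hs]; omega
  · have hp : prv b 6 = 5 := rfl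
    rw [hp, Rp5] at h2
    rw [Rp_ge6 (by omega)] at h1; have hs : sOff 6 = 3 := rfl; rw [hs]; omega
  · have hp : prv b (k+7) = k + 6 := rfl
    rw [hp, Rp_ge6 (by omega)] at h2
    rw [Rp_ge6 (by omega)] at h1
    have hs : sOff (k+7) = 3 := rfl
    rw [hs]; omega

lemma notRp_of_region (ha5 : 5 ≤ a) (hb8 : 8 ≤ b) (hb : b % 2 = 0) (hv : v < b)
    (h1 : sOff v ≤ i) (h2 : i + 4 ≤ sOff v + a) : ¬ Rp a v i ∧ ¬ Rp a (prv b v) i := by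
  obtain rfl|rfl|rfl|rfl|rfl|rfl|rfl|⟨k,rfl⟩ := vcases v
  · have hp : prv b 0 = b - 1 := rfl
    rw [hp, Rp0, Rp_ge6 (v := b-1) (by omega)]
    have hs : sOff 0 = 1 := rfl
    rw [hs] at h1 h2; omega
  · have hp : prv b 1 = 0 := rfl
    rw [hp, Rp1, Rp0]; have hs : sOff 1 = 0 := rfl; rw [hs] at h1 h2; omega
  · have hp : prv b 2 = 1 := rfl
    rw [hp, Rp2, Rp1]; have hs : sOff 2 = 0 := rfl; rw [hs] at h1 h2; omega
  · have hp : prv b 3 = 2 := rfl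
    rw [hp, Rp3, Rp2]; have hs : sOff 3 = 1 := rfl; rw [hs] at h1 h2; omega
  · have hp : prv b 4 = 3 := rfl
    rw [hp, Rp4, Rp3]; have hs : sOff 4 = 2 := rfl; rw [hs] at h1 h2; omega
  · have hp : prv b 5 = 4 := rfl
    rw [hp, Rp5, Rp4]; have hs : sOff 5 = 2 := rfl; rw [hs] at h1 h2; omega
  · have hp : prv b 6 = 5 := rfl
    rw [hp, Rp_ge6 (v := 6) (by omega), Rp5]; have hs : sOff 6 = 3 := rfl; rw [hs] at h1 h2; omega
  · have hp : prv b (k+7) = k + 6 := rfl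
    rw [hp, Rp_ge6 (v := k+7) (by omega), Rp_ge6 (v := k+6) (by omega)]
    have hs : sOff (k+7) = 3 := rfl
    rw [hs] at h1 h2; omega

lemma vp_spec (ha : a % 2 = 1) (h1 : sOff v ≤ i) (h2 : i + 4 ≤ sOff v + a) :
    sOff v ≤ vp v i ∧ vp v i + 4 ≤ sOff v + a ∧ vp v (vp v i) = i ∧
      (vp v i = i + 1 ∨ i = vp v i + 1) := by
  unfold vp; split_ifs <;> omega

lemma g_spec (ha5 : 5 ≤ a) (ha : a % 2 = 1) (hb8 : 8 ≤ b) (hb : b % 2 = 0)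
    (hv : v < b) (hi : i < a) :
    gr a b v i < a ∧ gc a b v i < b ∧
    gr a b (gc a b v i) (gr a b v i) = i ∧ gc a b (gc a b v i) (gr a b v i) = v ∧
    ((gc a b v i = v ∧ (gr a b v i = i + 1 ∨ i = gr a b v i + 1)) ∨
     (gr a b v i = i ∧ (gc a b v i = nxt b v ∨ v = nxt b (gc a b v i)))) := by
  by_cases h1 : Rp a v i
  · have e1 : gr a b v i = i := by unfold gr; rw [if_pos h1]
    have e2 : gc a b v i = nxt b v := by unfold gc; rw [if_pos h1]
    have h3 : ¬ Rp a (nxt b v) i := notRp_nxt ha5 hb8 hb hv h1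
    have h4 : Rp a (prv b (nxt b v)) i := by rw [prv_nxt hv]; exact h1
    have e3 : gr a b (nxt b v) i = i := by unfold gr; rw [if_neg h3, if_pos h4]
    have e4 : gc a b (nxt b v) i = prv b (nxt b v) := by unfold gc; rw [if_neg h3, if_pos h4]
    rw [e1, e2, e3, e4, prv_nxt hv]
    exact ⟨hi, nxt_lt (by omega) hv, rfl, rfl, Or.inr ⟨rfl, Or.inl rfl⟩⟩
  · by_cases h2 : Rp a (prv b v) i
    · have e1 : gr a b v i = i := by unfold gr; rw [if_neg h1, if_pos h2]
      have e2 : gc a b v i = prv b v := by unfold gc; rw [if_neg h1, if_pos h2]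
      have e3 : gr a b (prv b v) i = i := by unfold gr; rw [if_pos h2]
      have e4 : gc a b (prv b v) i = nxt b (prv b v) := by unfold gc; rw [if_pos h2]
      rw [e1, e2, e3, e4, nxt_prv (by omega) hv]
      exact ⟨hi, prv_lt (by omega) hv, rfl, rfl, Or.inr ⟨rfl, Or.inr rfl⟩⟩
    · have e1 : gr a b v i = vp v i := by unfold gr; rw [if_neg h1, if_neg h2]
      have e2 : gc a b v i = v := by unfold gc; rw [if_neg h1, if_neg h2]
      obtain ⟨r1, r2⟩ := region_of ha5 hb8 hb hv hi h1 h2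
      obtain ⟨w1, w2, w3, w4⟩ := vp_spec ha r1 r2
      obtain ⟨h1', h2'⟩ := notRp_of_region ha5 hb8 hb hv w1 w2
      have e3 : gr a b v (vp v i) = vp v (vp v i) := by unfold gr; rw [if_neg h1', if_neg h2']
      have e4 : gc a b v (vp v i) = v := by unfold gc; rw [if_neg h1', if_neg h2']
      rw [e1, e2, e3, e4, w3]
      have hsle : sOff v ≤ 3 := sOff_le
      exact ⟨by omega, hv, rfl, rfl, Or.inl ⟨rfl, w4⟩⟩

lemma cast_nxt (hv : v < b) : ((nxt b v : ℕ) : ZMod b) = (v : ZMod b) + 1 := by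
  unfold nxt
  split_ifs with h
  · have h2 : ((v : ZMod b) + 1) = ((v + 1 : ℕ) : ZMod b) := by push_cast; ring
    rw [h2, h, ZMod.natCast_self, Nat.cast_zero]
  · push_cast; ring
end

instance (m : ℕ) : NeZero (8 + 2 * m) := ⟨by omega⟩

noncomputable def fm (n m : ℕ) (x : Fin (5+2*n) × ZMod (8+2*m)) :
    Fin (5+2*n) × ZMod (8+2*m) :=
  (⟨gr (5+2*n) (8+2*m) x.2.val x.1.val % (5+2*n), Nat.mod_lt _ (by omega)⟩,
   (gc (5+2*n) (8+2*m) x.2.val x.1.val : ZMod (8+2*m)))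

section
variable (n m : ℕ)

lemma spec_x (x : Fin (5+2*n) × ZMod (8+2*m)) :
    gr (5+2*n) (8+2*m) x.2.val x.1.val < 5+2*n ∧
    gc (5+2*n) (8+2*m) x.2.val x.1.val < 8+2*m ∧
    gr (5+2*n) (8+2*m) (gc (5+2*n) (8+2*m) x.2.val x.1.val) (gr (5+2*n) (8+2*m) x.2.val x.1.val) = x.1.val ∧
    gc (5+2*n) (8+2*m) (gc (5+2*n) (8+2*m) x.2.val x.1.val) (gr (5+2*n) (8+2*m) x.2.val x.1.val) = x.2.val ∧
    ((gc (5+2*n) (8+2*m) x.2.val x.1.val = x.2.val ∧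
        (gr (5+2*n) (8+2*m) x.2.val x.1.val = x.1.val + 1 ∨
         x.1.val = gr (5+2*n) (8+2*m) x.2.val x.1.val + 1)) ∨
     (gr (5+2*n) (8+2*m) x.2.val x.1.val = x.1.val ∧
        (gc (5+2*n) (8+2*m) x.2.val x.1.val = nxt (8+2*m) x.2.val ∨
         x.2.val = nxt (8+2*m) (gc (5+2*n) (8+2*m) x.2.val x.1.val)))) :=
  g_spec (by omega) (by omega) (by omega) (by omega) (ZMod.val_lt x.2) x.1.isLt

lemma fm_fst (x : Fin (5+2*n) × ZMod (8+2*m)) :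
    ((fm n m x).1 : ℕ) = gr (5+2*n) (8+2*m) x.2.val x.1.val :=
  Nat.mod_eq_of_lt (spec_x n m x).1

lemma fm_snd_val (x : Fin (5+2*n) × ZMod (8+2*m)) :
    (fm n m x).2.val = gc (5+2*n) (8+2*m) x.2.val x.1.val :=
  ZMod.val_cast_of_lt (spec_x n m x).2.1

lemma fm_invol (x : Fin (5+2*n) × ZMod (8+2*m)) : fm n m (fm n m x) = x := by
  obtain ⟨s1, s2, s3, s4, _⟩ := spec_x n m x
  have h1 : ((fm n m (fm n m x)).1 : ℕ) = (x.1 : ℕ) := by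
    rw [fm_fst, fm_snd_val, fm_fst]; exact s3
  have h2 : (fm n m (fm n m x)).2.val = x.2.val := by
    rw [fm_snd_val, fm_snd_val, fm_fst]; exact s4
  exact Prod.ext (Fin.ext h1) (ZMod.val_injective _ h2)

lemma fm_adj (x : Fin (5+2*n) × ZMod (8+2*m)) : cylAdj (5+2*n) (8+2*m) x (fm n m x) := by
  obtain ⟨s1, s2, s3, s4, hadj | hadj⟩ := spec_x n m x
  · left
    refine ⟨ZMod.val_injective _ ?_, ?_⟩
    · rw [fm_snd_val]; exact hadj.1.symm
    · rw [fm_fst]; omega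
  · right
    refine ⟨Fin.ext ?_, ?_⟩
    · rw [fm_fst]; exact hadj.1.symm
    · rcases hadj.2 with h | h
      · left
        have hh : (fm n m x).2 = ((gc (5+2*n) (8+2*m) x.2.val x.1.val : ℕ) : ZMod (8+2*m)) := rfl
        rw [hh, h, cast_nxt (ZMod.val_lt x.2), ZMod.natCast_rightInverse x.2]
      · right
        have hx2 : x.2 = ((x.2.val : ℕ) : ZMod (8+2*m)) := (ZMod.natCast_rightInverse x.2).symm
        rw [hx2, h, cast_nxt s2]
        have hh : (fm n m x).2 = ((gc (5+2*n) (8+2*m) x.2.val x.1.val : ℕ) : ZMod (8+2*m)) := rfl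
        rw [hh]

noncomputable def TT : Set (Sym2 (Fin (5+2*n) × ZMod (8+2*m))) :=
  Set.range (fun x => s(x, fm n m x))

lemma TT_tiling : cylIsTiling (5+2*n) (8+2*m) (TT n m) := by
  constructor
  · rintro p ⟨x, rfl⟩
    exact ⟨x, fm n m x, fm_adj n m x, rfl⟩
  · intro x
    refine ⟨s(x, fm n m x), ⟨⟨x, rfl⟩, Sym2.mem_mk_left _ _⟩, ?_⟩
    rintro p ⟨⟨y, rfl⟩, hx⟩
    rcases Sym2.mem_iff.mp hx with rfl | h
    · rfl
    · have hy : y = fm n m x := by rw [h, fm_invol]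
      show s(y, fm n m y) = s(x, fm n m x)
      rw [hy, fm_invol n m x]
      exact Sym2.eq_swap
end


end CylFF

open CylFF in
/-- For all natural numbers `n` and `m`, the cylindrical board
`(5 + 2 * n)′ × (8 + 2 * m)` admits a fault-free domino tiling. -/
theorem cyl_faultFree_5'8 :
    ∀ n m : ℕ, cylFaultFreeTileable (5 + 2 * n) (8 + 2 * m) := by
  intro n m
  refine ⟨TT n m, TT_tiling n m, ?_, ?_⟩
  · -- horizontal fault-lines
    intro i hi
    have key : ∀ w : ℕ, w < 8+2*m → ¬ Rp (5+2*n) w i → ¬ Rp (5+2*n) (prv (8+2*m) w) i →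
        vp w i = i + 1 →
        ∃ c d : Fin (5+2*n) × ZMod (8+2*m),
          s(c, d) ∈ TT n m ∧ c.2 = d.2 ∧ (c.1 : ℕ) = i ∧ (d.1 : ℕ) = i + 1 := by
      intro w hw h1 h2 h3
      set c : Fin (5+2*n) × ZMod (8+2*m) := (⟨i, by omega⟩, (w : ZMod (8+2*m))) with hc
      have hval : c.2.val = w := ZMod.val_cast_of_lt hw
      have hgr : gr (5+2*n) (8+2*m) c.2.val c.1.val = i + 1 := by
        rw [hval]
        show gr _ _ w i = i + 1
        unfold gr; rw [if_neg h1, if_neg h2, h3]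
      have hgc : gc (5+2*n) (8+2*m) c.2.val c.1.val = w := by
        rw [hval]
        show gc _ _ w i = w
        unfold gc; rw [if_neg h1, if_neg h2]
      refine ⟨c, fm n m c, ⟨c, rfl⟩, ?_, rfl, ?_⟩
      · refine (ZMod.val_injective _ ?_).symm
        rw [fm_snd_val, hgc, hval]
      · rw [fm_fst, hgr]
    rcases (by omega : i = 0 ∨ i = 1 ∨ (2 ≤ i ∧ i % 2 = 0) ∨ (3 ≤ i ∧ i % 2 = 1)) with
      rfl | rfl | ⟨h2, hp⟩ | ⟨h3, hp⟩
    · refine key 1 (by omega) ?_ ?_ ?_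
      · rw [Rp1]; omega
      · show ¬ Rp _ 0 _; rw [Rp0]; omega
      · unfold vp; have hs : sOff 1 = 0 := rfl; rw [hs, if_pos (by omega)]
    · refine key 0 (by omega) ?_ ?_ ?_
      · rw [Rp0]; omega
      · show ¬ Rp _ (8+2*m-1) _
        rw [Rp_ge6 (by omega)]; omega
      · unfold vp; have hs : sOff 0 = 1 := rfl; rw [hs, if_pos (by omega)]
    · refine key 4 (by omega) ?_ ?_ ?_
      · rw [Rp4]; omega
      · show ¬ Rp _ 3 _; rw [Rp3]; omega
      · unfold vp; have hs : sOff 4 = 2 := rfl; rw [hs, if_pos (by omega)]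
    · refine key 6 (by omega) ?_ ?_ ?_
      · rw [Rp_ge6 (by omega)]; omega
      · show ¬ Rp _ 5 _; rw [Rp5]; omega
      · unfold vp; have hs : sOff 6 = 3 := rfl; rw [hs, if_pos (by omega)]
  · -- vertical fault-lines
    intro j
    have hjv : j.val < 8+2*m := ZMod.val_lt j
    have key : ∀ r : ℕ, r < 5+2*n → Rp (5+2*n) j.val r →
        ∃ i : Fin (5+2*n), s((i, j), (i, j + 1)) ∈ TT n m := by
      intro r hr hRp
      refine ⟨⟨r, hr⟩, ?_⟩
      set x : Fin (5+2*n) × ZMod (8+2*m) := (⟨r, hr⟩, j) with hx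
      have hfm : fm n m x = (⟨r, hr⟩, j + 1) := by
        have hgr : gr (5+2*n) (8+2*m) x.2.val x.1.val = r := by
          show gr _ _ j.val r = r
          unfold gr; rw [if_pos hRp]
        have hgc : gc (5+2*n) (8+2*m) x.2.val x.1.val = nxt (8+2*m) j.val := by
          show gc _ _ j.val r = _
          unfold gc; rw [if_pos hRp]
        refine Prod.ext (Fin.ext ?_) ?_
        · rw [fm_fst, hgr]
        · show ((gc (5+2*n) (8+2*m) x.2.val x.1.val : ℕ) : ZMod (8+2*m)) = j + 1
          rw [hgc, cast_nxt hjv, ZMod.natCast_rightInverse j]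
      refine ⟨x, ?_⟩
      show s(x, fm n m x) = _
      rw [hfm]
    rcases vcases j.val with h|h|h|h|h|h|h|⟨k,h⟩
    · refine key (5+2*n-2) (by omega) ?_; rw [h, Rp0] <;> omega
    · refine key (5+2*n-3) (by omega) ?_; rw [h, Rp1] <;> omega
    · refine key (5+2*n-2) (by omega) ?_; rw [h, Rp2] <;> omega
    · refine key 0 (by omega) ?_; rw [h, Rp3] <;> omega
    · refine key 1 (by omega) ?_; rw [h, Rp4] <;> omega
    · refine key 0 (by omega) ?_; rw [h, Rp5] <;> omega
    · refine key 1 (by omega) ?_; rw [h, Rp_ge6 (by omega)]; omega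
    · rcases Nat.even_or_odd k with he | ho
      · refine key 0 (by omega) ?_; rw [h, Rp_ge6 (by omega)]
        rcases he with ⟨t, ht⟩; omega
      · refine key 1 (by omega) ?_; rw [h, Rp_ge6 (by omega)]
        rcases ho with ⟨t, ht⟩; omega
end

section
/- For every natural number n, the cylindrical board (2+n)′×2 does not admit a fault-free domino tiling. -/
lemma cylAdj_symm' (a b : ℕ) (e f : Fin a × ZMod b) (h : cylAdj a b e f) :
    cylAdj a b f e := by
  rcases h with ⟨h1, h2⟩ | ⟨h1, h2⟩
  · exact Or.inl ⟨h1.symm, h2.symm⟩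
  · exact Or.inr ⟨h1.symm, h2.symm⟩

/-- For every natural number `n`, the cylindrical board `(2 + n)′ × (2)`
does not admit a fault-free domino tiling. -/
theorem cyl_not_faultFree_2n'2 :
    ∀ n : ℕ, ¬ cylFaultFreeTileable (2 + n) (2) := by
  intro n h
  obtain ⟨T, ⟨hadj, huniq⟩, hH, hV⟩ := h
  have uniq : ∀ (x : Fin (2+n) × ZMod 2) p q, p ∈ T → q ∈ T → x ∈ p → x ∈ q → p = q := by
    intro x p q hp hq hxp hxq
    obtain ⟨r, _, hru⟩ := huniq x
    rw [hru p ⟨hp, hxp⟩, hru q ⟨hq, hxq⟩]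
  have hne : ∀ j : ZMod 2, j + 1 ≠ j := by decide
  have hor : ∀ j k : ZMod 2, k = j ∨ k = j + 1 := by decide
  have hsucc : ∀ j : ZMod 2, j + 1 + 1 = j := by decide
  obtain ⟨c, d, hD, hcd2, hc1, hd1⟩ := hH 0 (by omega)
  set r0 : Fin (2+n) := ⟨0, by omega⟩ with hr0
  set r1 : Fin (2+n) := ⟨1, by omega⟩ with hr1
  have h0v : (r0 : ℕ) = 0 := rfl
  have h1v : (r1 : ℕ) = 1 := rfl
  set j := c.2 with hj
  have hc : c = (r0, j) := Prod.ext (Fin.ext (hc1.trans h0v.symm)) rfl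
  have hd : d = (r1, j) := Prod.ext (Fin.ext (hd1.trans h1v.symm)) hcd2.symm
  rw [hc, hd] at hD
  -- The domino covering (r0, j+1) must be the vertical one joining it to (r1, j+1).
  have key : ∀ e f : Fin (2+n) × ZMod 2, cylAdj (2+n) 2 e f → e = (r0, j+1) →
      s(e, f) ∈ T → s(e, f) = s((r0, j+1), (r1, j+1)) := by
    intro e f hef he hT
    subst he
    rcases hef with ⟨h2, h1⟩ | ⟨h1, h2⟩
    · -- vertical neighbor: must be (r1, j+1)
      have hf1 : (f.1 : ℕ) = 1 := by
        simp only [hr0] at h1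
        rcases h1 with h | h <;> omega
      have hf : f = (r1, j + 1) := Prod.ext (Fin.ext (hf1.trans h1v.symm)) h2.symm
      rw [hf]
    · -- horizontal neighbor: f = (r0, j) = c, contradiction with the domino D
      exfalso
      have hf2 : f.2 = j := by
        rcases h2 with h | h
        · rw [hsucc] at h; exact h
        · have h' := congrArg (· + 1) h
          simp only [hsucc] at h'
          exact h'.symm
      have hf : f = (r0, j) := Prod.ext h1.symm hf2
      rw [hf] at hT
      have hEq : s(((r0 : Fin (2+n)), j+1), ((r0 : Fin (2+n)), j)) = s((r0, j), (r1, j)) :=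
        uniq (r0, j) _ _ hT hD (Sym2.mem_mk_right _ _) (Sym2.mem_mk_left _ _)
      have hmem : ((r0 : Fin (2+n)), j+1) ∈ s(((r0 : Fin (2+n)), j), ((r1 : Fin (2+n)), j)) := by
        rw [← hEq]; exact Sym2.mem_mk_left _ _
      rw [Sym2.mem_iff] at hmem
      rcases hmem with h | h
      · exact hne j (congrArg Prod.snd h)
      · have h' : (0 : ℕ) = 1 := congrArg Fin.val (congrArg Prod.fst h)
        omega
  obtain ⟨P, ⟨hPT, hxP⟩, _⟩ := huniq ((r0 : Fin (2+n)), j + 1)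
  obtain ⟨e, f, hef, hPef⟩ := hadj _ hPT
  rw [hPef, Sym2.mem_iff] at hxP
  have hP : s(((r0 : Fin (2+n)), j+1), ((r1 : Fin (2+n)), j+1)) ∈ T := by
    rcases hxP with hx | hx
    · rw [← key e f hef hx.symm (hPef ▸ hPT), ← hPef]
      exact hPT
    · have hswap : s(e, f) = s(f, e) := Sym2.eq_swap
      rw [← key f e (cylAdj_symm' _ _ _ _ hef) hx.symm (hswap ▸ hPef ▸ hPT), ← hswap, ← hPef]
      exact hPT
  -- Every cell in rows 0,1 is covered by one of these two vertical dominoes.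
  have cover : ∀ x : Fin (2+n) × ZMod 2, (x.1 : ℕ) < 2 →
      x ∈ s(((r0 : Fin (2+n)), j), ((r1 : Fin (2+n)), j)) ∨
      x ∈ s(((r0 : Fin (2+n)), j+1), ((r1 : Fin (2+n)), j+1)) := by
    intro x hx
    have h1 : x.1 = r0 ∨ x.1 = r1 := by
      have hx' : (x.1 : ℕ) = 0 ∨ (x.1 : ℕ) = 1 := by omega
      rcases hx' with h | h
      · exact Or.inl (Fin.ext (h.trans h0v.symm))
      · exact Or.inr (Fin.ext (h.trans h1v.symm))
    rcases hor j x.2 with h2 | h2 <;> rcases h1 with h1 | h1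
    · exact Or.inl (by rw [Sym2.mem_iff]; exact Or.inl (Prod.ext h1 h2))
    · exact Or.inl (by rw [Sym2.mem_iff]; exact Or.inr (Prod.ext h1 h2))
    · exact Or.inr (by rw [Sym2.mem_iff]; exact Or.inl (Prod.ext h1 h2))
    · exact Or.inr (by rw [Sym2.mem_iff]; exact Or.inr (Prod.ext h1 h2))
  cases n with
  | zero =>
    -- height 2: no horizontal domino can exist, contradicting the vertical fault-line
    obtain ⟨i, hQ⟩ := hV 0
    have hi : ((i : Fin (2+0)) : ℕ) < 2 := i.isLt
    rcases cover (i, 0) hi with hmem | hmem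
    · have hEq := uniq (i, 0) _ _ hQ hD (Sym2.mem_mk_left _ _) hmem
      have h0 : ((i : Fin (2+0)), (0 : ZMod 2)) ∈ s(((r0:Fin (2+0)), j), (r1, j)) := by
        rw [← hEq]; exact Sym2.mem_mk_left _ _
      have h1 : ((i : Fin (2+0)), (0 : ZMod 2) + 1) ∈ s(((r0:Fin (2+0)), j), (r1, j)) := by
        rw [← hEq]; exact Sym2.mem_mk_right _ _
      rw [Sym2.mem_iff] at h0 h1
      have e0 : (0 : ZMod 2) = j := by
        rcases h0 with h | h <;> exact congrArg Prod.snd h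
      have e1 : (0 : ZMod 2) + 1 = j := by
        rcases h1 with h | h <;> exact congrArg Prod.snd h
      exact hne 0 (e1.trans e0.symm)
    · have hEq := uniq (i, 0) _ _ hQ hP (Sym2.mem_mk_left _ _) hmem
      have h0 : ((i : Fin (2+0)), (0 : ZMod 2)) ∈ s(((r0:Fin (2+0)), j+1), (r1, j+1)) := by
        rw [← hEq]; exact Sym2.mem_mk_left _ _
      have h1 : ((i : Fin (2+0)), (0 : ZMod 2) + 1) ∈ s(((r0:Fin (2+0)), j+1), (r1, j+1)) := by
        rw [← hEq]; exact Sym2.mem_mk_right _ _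
      rw [Sym2.mem_iff] at h0 h1
      have e0 : (0 : ZMod 2) = j + 1 := by
        rcases h0 with h | h <;> exact congrArg Prod.snd h
      have e1 : (0 : ZMod 2) + 1 = j + 1 := by
        rcases h1 with h | h <;> exact congrArg Prod.snd h
      exact hne 0 (e1.trans e0.symm)
  | succ m =>
    -- height ≥ 3: the fault-line between rows 1 and 2 cannot be crossed
    obtain ⟨c', d', hQ, hcd2', hc1', hd1'⟩ := hH 1 (by omega)
    have hcm : (c'.1 : ℕ) < 2 := by omega
    have hc'mem : c' ∈ s(c', d') := Sym2.mem_mk_left _ _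
    rcases cover c' hcm with hmem | hmem
    · have hEq := uniq c' _ _ hQ hD hc'mem hmem
      have hd' : d' ∈ s(((r0 : Fin (2+(m+1))), j), (r1, j)) := by
        rw [← hEq]; exact Sym2.mem_mk_right _ _
      rw [Sym2.mem_iff] at hd'
      rcases hd' with h | h
      · have h' : (d'.1 : ℕ) = 0 := congrArg Fin.val (congrArg Prod.fst h)
        omega
      · have h' : (d'.1 : ℕ) = 1 := congrArg Fin.val (congrArg Prod.fst h)
        omega
    · have hEq := uniq c' _ _ hQ hP hc'mem hmem
      have hd' : d' ∈ s(((r0 : Fin (2+(m+1))), j+1), (r1, j+1)) := by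
        rw [← hEq]; exact Sym2.mem_mk_right _ _
      rw [Sym2.mem_iff] at hd'
      rcases hd' with h | h
      · have h' : (d'.1 : ℕ) = 0 := congrArg Fin.val (congrArg Prod.fst h)
        omega
      · have h' : (d'.1 : ℕ) = 1 := congrArg Fin.val (congrArg Prod.fst h)
        omega
end

section
/- For every natural number n, the cylindrical board 2′×(2+n) does not admit a fault-free domino tiling. -/
/-- For every natural number `n`, the cylindrical board `(2)′ × (2 + n)`
does not admit a fault-free domino tiling. -/
theorem cyl_not_faultFree_2'2n :
    ∀ n : ℕ, ¬ cylFaultFreeTileable (2) (2 + n) := by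
  intro n ⟨T, hT, hF⟩
  haveI : Fact (1 < 2 + n) := ⟨by omega⟩
  obtain ⟨c, d, hcdT, hcol, hc1, hd1⟩ := hF.1 0 (by norm_num)
  set j : ZMod (2 + n) := c.2 with hj
  obtain ⟨i, hiT⟩ := hF.2 j
  have hmem : (i, j) ∈ s(c, d) := by
    have hcases : i = c.1 ∨ i = d.1 := by
      rcases Fin.exists_fin_two.mp ⟨i, rfl⟩ with h | h
      · left; apply Fin.ext; rw [h]; omega
      · right; apply Fin.ext; rw [h]; omega
    rw [Sym2.mem_iff]
    rcases hcases with h | h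
    · left; rw [h]
    · right; rw [h]; exact Prod.ext rfl (hj.symm.trans hcol)
  obtain ⟨p, hp, hpu⟩ := hT.2 (i, j)
  have h1 : s(c, d) = p := hpu _ ⟨hcdT, hmem⟩
  have h2 : s((i, j), (i, j + 1)) = p := hpu _ ⟨hiT, Sym2.mem_mk_left _ _⟩
  have h3 : ((i, j + 1) : Fin 2 × ZMod (2 + n)) ∈ s(c, d) := by
    rw [h1, ← h2]; exact Sym2.mem_mk_right _ _
  have h4 : j + 1 = j := by
    rcases Sym2.mem_iff.mp h3 with h | h
    · exact congrArg Prod.snd h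
    · exact (congrArg Prod.snd h).trans hcol.symm
  have : (1 : ZMod (2 + n)) = 0 := by
    have := h4
    nth_rewrite 2 [← add_zero j] at this
    exact add_left_cancel this
  exact one_ne_zero this
end

section
/- For every natural number n, the cylindrical board 3′×(4+2n) does not admit a fault-free domino tiling. -/
lemma cyl_adj_of_two {b : ℕ} {j : ZMod b} {g : Fin 3 × ZMod b}
    (h : cylAdj 3 b ((2 : Fin 3), j) g ∨ cylAdj 3 b g ((2 : Fin 3), j)) :
    g = ((1 : Fin 3), j) ∨ g = ((2 : Fin 3), j + 1) ∨ g = ((2 : Fin 3), j - 1) := by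
  have hg3 : (g.1 : ℕ) < 3 := g.1.isLt
  rcases h with h | h <;> rcases h with ⟨h1, h2⟩ | ⟨h1, h2⟩
  · -- vertical, (2,j) on top: impossible up, so g is row 1
    have h2' : (2 : ℕ) + 1 = (g.1 : ℕ) ∨ (g.1 : ℕ) + 1 = 2 := by simpa using h2
    left
    have hv : (g.1 : ℕ) = 1 := by omega
    exact Prod.ext (Fin.ext (by simpa using hv)) h1.symm
  · -- horizontal, c = (2,j), d = g : g.2 = j+1 or j = g.2+1
    have hfst : g.1 = (2 : Fin 3) := h1.symm
    rcases h2 with h2 | h2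
    · right; left
      exact Prod.ext hfst (by simpa using h2)
    · right; right
      refine Prod.ext hfst ?_
      have h2' : j = g.2 + 1 := by simpa using h2
      show g.2 = j - 1
      linear_combination -h2'
  · have h2' : (g.1 : ℕ) + 1 = 2 ∨ (2 : ℕ) + 1 = (g.1 : ℕ) := by simpa using h2
    left
    have hv : (g.1 : ℕ) = 1 := by omega
    exact Prod.ext (Fin.ext (by simpa using hv)) h1
  · -- horizontal, c = g, d = (2,j) : j = g.2+1 or g.2 = j+1
    have hfst : g.1 = (2 : Fin 3) := h1
    rcases h2 with h2 | h2
    · right; right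
      refine Prod.ext hfst ?_
      have h2' : j = g.2 + 1 := by simpa using h2
      show g.2 = j - 1
      linear_combination -h2'
    · right; left
      exact Prod.ext hfst (by simpa using h2)

/-- For every natural number `n`, the cylindrical board `(3)′ × (4 + 2 * n)`
does not admit a fault-free domino tiling. -/
theorem cyl_not_faultFree_3'42n :
    ∀ n : ℕ, ¬ cylFaultFreeTileable (3) (4 + 2 * n) := by
  intro n hcontra
  obtain ⟨T, ⟨hdom, huniq⟩, hH, hV⟩ := hcontra
  haveI : NeZero (4 + 2 * n) := ⟨by omega⟩
  have hb1 : (1 : ZMod (4 + 2 * n)) ≠ 0 := by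
    have h : ((1 : ℕ) : ZMod (4 + 2 * n)) ≠ 0 := by
      rw [Ne, ZMod.natCast_eq_zero_iff]
      intro h
      have := Nat.le_of_dvd one_pos h
      omega
    simpa using h
  have hb2 : (2 : ZMod (4 + 2 * n)) ≠ 0 := by
    have h : ((2 : ℕ) : ZMod (4 + 2 * n)) ≠ 0 := by
      rw [Ne, ZMod.natCast_eq_zero_iff]
      intro h
      have := Nat.le_of_dvd two_pos h
      omega
    simpa using h
  -- the vertical domino crossing the fault line between rows 0 and 1
  obtain ⟨c, d, hcd, hc2, hc1, hd1⟩ := hH 0 (by norm_num)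
  set j := c.2 with hj
  have hc : c = ((0 : Fin 3), j) :=
    Prod.ext (Fin.ext (by simpa using hc1)) rfl
  have hd : d = ((1 : Fin 3), j) :=
    Prod.ext (Fin.ext (by simpa using hd1)) hc2.symm
  rw [hc, hd] at hcd
  -- the domino containing (2, j)
  obtain ⟨p, ⟨hpT, hpmem⟩, _⟩ := huniq ((2 : Fin 3), j)
  obtain ⟨e, f, hef, hpef⟩ := hdom p hpT
  subst hpef
  rw [Sym2.mem_iff] at hpmem
  -- express p = s((2,j), g) for the other endpoint g
  obtain ⟨g, hpg, hadj⟩ :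
      ∃ g, s(e, f) = s(((2 : Fin 3), j), g) ∧
        (cylAdj 3 (4 + 2 * n) ((2 : Fin 3), j) g ∨
         cylAdj 3 (4 + 2 * n) g ((2 : Fin 3), j)) := by
    rcases hpmem with h | h
    · exact ⟨f, by rw [← h], Or.inl (h ▸ hef)⟩
    · exact ⟨e, by rw [← h, Sym2.eq_swap], Or.inr (h ▸ hef)⟩
  rw [hpg] at hpT
  rcases cyl_adj_of_two hadj with hg | hg | hg
  · -- g = (1,j): contradicts uniqueness at (1,j)
    subst hg
    have heq := (huniq ((1 : Fin 3), j)).unique ⟨hpT, by simp⟩ ⟨hcd, by simp⟩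
    have hm : ((2 : Fin 3), j) ∈ s(((0 : Fin 3), j), ((1 : Fin 3), j)) := by
      rw [← heq]; simp
    rw [Sym2.mem_iff] at hm
    rcases hm with h | h
    · exact absurd (congrArg Prod.fst h) (by simp)
    · exact absurd (congrArg Prod.fst h) (by simp)
  · -- g = (2, j+1): the fault line between columns j-1 and j is uncrossed
    subst hg
    obtain ⟨i, hq⟩ := hV (j - 1)
    rw [sub_add_cancel] at hq
    fin_cases i
    · have heq := (huniq ((0 : Fin 3), j)).unique ⟨hq, by simp⟩ ⟨hcd, by simp⟩
      have hm : ((0 : Fin 3), j - 1) ∈ s(((0 : Fin 3), j), ((1 : Fin 3), j)) := by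
        rw [← heq]; simp
      rw [Sym2.mem_iff] at hm
      rcases hm with h | h
      · exact hb1 (by linear_combination -(congrArg Prod.snd h))
      · exact absurd (congrArg Prod.fst h) (by simp)
    · have heq := (huniq ((1 : Fin 3), j)).unique ⟨hq, by simp⟩ ⟨hcd, by simp⟩
      have hm : ((1 : Fin 3), j - 1) ∈ s(((0 : Fin 3), j), ((1 : Fin 3), j)) := by
        rw [← heq]; simp
      rw [Sym2.mem_iff] at hm
      rcases hm with h | h
      · exact absurd (congrArg Prod.fst h) (by simp)
      · exact hb1 (by linear_combination -(congrArg Prod.snd h))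
    · have heq := (huniq ((2 : Fin 3), j)).unique ⟨hq, by simp⟩ ⟨hpT, by simp⟩
      have hm : ((2 : Fin 3), j - 1) ∈ s(((2 : Fin 3), j), ((2 : Fin 3), j + 1)) := by
        rw [← heq]; simp
      rw [Sym2.mem_iff] at hm
      rcases hm with h | h
      · exact hb1 (by linear_combination -(congrArg Prod.snd h))
      · exact hb2 (by linear_combination -(congrArg Prod.snd h))
  · -- g = (2, j-1): the fault line between columns j and j+1 is uncrossed
    subst hg
    obtain ⟨i, hq⟩ := hV j
    fin_cases i
    · have heq := (huniq ((0 : Fin 3), j)).unique ⟨hq, by simp⟩ ⟨hcd, by simp⟩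
      have hm : ((0 : Fin 3), j + 1) ∈ s(((0 : Fin 3), j), ((1 : Fin 3), j)) := by
        rw [← heq]; simp
      rw [Sym2.mem_iff] at hm
      rcases hm with h | h
      · exact hb1 (by linear_combination congrArg Prod.snd h)
      · exact absurd (congrArg Prod.fst h) (by simp)
    · have heq := (huniq ((1 : Fin 3), j)).unique ⟨hq, by simp⟩ ⟨hcd, by simp⟩
      have hm : ((1 : Fin 3), j + 1) ∈ s(((0 : Fin 3), j), ((1 : Fin 3), j)) := by
        rw [← heq]; simp
      rw [Sym2.mem_iff] at hm
      rcases hm with h | h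
      · exact absurd (congrArg Prod.fst h) (by simp)
      · exact hb1 (by linear_combination congrArg Prod.snd h)
    · have heq := (huniq ((2 : Fin 3), j)).unique ⟨hq, by simp⟩ ⟨hpT, by simp⟩
      have hm : ((2 : Fin 3), j + 1) ∈ s(((2 : Fin 3), j), ((2 : Fin 3), j - 1)) := by
        rw [← heq]; simp
      rw [Sym2.mem_iff] at hm
      rcases hm with h | h
      · exact hb1 (by linear_combination congrArg Prod.snd h)
      · exact hb2 (by linear_combination congrArg Prod.snd h)
end

section
/- For every natural number n, the cylindrical board (4+n)′×4 does not admit a fault-free domino tiling. -/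
namespace CylAux
open Finset

lemma cardSplit (u d : ZMod 4 → Bool) (h : ∀ j, ¬(u j = true ∧ d j = true)) :
    #(filter (fun j => u j = true ∨ d j = true) univ)
      = #(filter (fun j => u j = true) univ) + #(filter (fun j => d j = true) univ) := by
  revert u d; decide

def rowHyp (w l r : ZMod 4 → Bool) : Prop := ∀ j,
  (w j = true ∨ l j = true ∨ r j = true) ∧
  ¬(w j = true ∧ l j = true) ∧ ¬(w j = true ∧ r j = true) ∧
  ¬(l j = true ∧ r j = true) ∧ r j = l (j + 1)

instance (w l r : ZMod 4 → Bool) : Decidable (rowHyp w l r) := by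
  unfold rowHyp; infer_instance

lemma rowKey1 (w l r : ZMod 4 → Bool) (h : rowHyp w l r) :
    #(filter (fun j => w j = true) univ) % 2 = 0 := by
  revert w l r; decide

lemma rowKey2 (w l r : ZMod 4 → Bool) (h : rowHyp w l r)
    (h6 : #(filter (fun j => w j = true) univ) = 4) :
    ∀ j, ¬ r j = true := by
  revert w l r; decide

lemma rowKey3 (w l r : ZMod 4 → Bool) (h : rowHyp w l r)
    (h6 : #(filter (fun j => w j = true) univ) = 2) :
    ∀ j j', r j = true → r j' = true → j = j' := by
  revert w l r; decide

section
open scoped Classical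

variable {a : ℕ} (T : Set (Sym2 (Fin a × ZMod 4)))

def U (i : Fin a) (j : ZMod 4) : Prop :=
  ∃ i' : Fin a, (i' : ℕ) + 1 = (i : ℕ) ∧ s((i', j), (i, j)) ∈ T

def D (i : Fin a) (j : ZMod 4) : Prop :=
  ∃ i' : Fin a, (i : ℕ) + 1 = (i' : ℕ) ∧ s((i, j), (i', j)) ∈ T

def L (i : Fin a) (j : ZMod 4) : Prop := s((i, j - 1), (i, j)) ∈ T

def R (i : Fin a) (j : ZMod 4) : Prop := s((i, j), (i, j + 1)) ∈ T

lemma R_iff_L (i : Fin a) (j : ZMod 4) : R T i j ↔ L T i (j + 1) := by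
  unfold R L
  rw [add_sub_cancel_right]

lemma mem_unique (hT : cylIsTiling a 4 T) {x : Fin a × ZMod 4} {p q}
    (hp : p ∈ T) (hq : q ∈ T) (hxp : x ∈ p) (hxq : x ∈ q) : p = q := by
  obtain ⟨u, -, hu⟩ := hT.2 x
  rw [hu p ⟨hp, hxp⟩, hu q ⟨hq, hxq⟩]

lemma total (hT : cylIsTiling a 4 T) (i : Fin a) (j : ZMod 4) :
    U T i j ∨ D T i j ∨ L T i j ∨ R T i j := by
  obtain ⟨p, ⟨hp, hx⟩, -⟩ := hT.2 (i, j)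
  obtain ⟨⟨ci, cj⟩, ⟨di, dj⟩, hadj, rfl⟩ := hT.1 p hp
  rw [Sym2.mem_iff] at hx
  rcases hx with hx | hx <;> rw [Prod.mk.injEq] at hx <;>
    obtain ⟨h1, h2⟩ := hx <;> subst h1 <;> subst h2
  · rcases hadj with ⟨hc, hr | hr⟩ | ⟨hr, hc | hc⟩
    · dsimp only at hc hr; subst hc
      exact Or.inr (Or.inl ⟨di, hr, hp⟩)
    · dsimp only at hc hr; subst hc
      exact Or.inl ⟨di, hr, by rwa [Sym2.eq_swap] at hp⟩
    · dsimp only at hc hr; subst hr; subst hc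
      exact Or.inr (Or.inr (Or.inr hp))
    · dsimp only at hc hr; subst hr
      have hd : dj = j - 1 := eq_sub_of_add_eq hc.symm
      subst hd
      exact Or.inr (Or.inr (Or.inl (by rwa [Sym2.eq_swap] at hp)))
  · rcases hadj with ⟨hc, hr | hr⟩ | ⟨hr, hc | hc⟩
    · dsimp only at hc hr; subst hc
      exact Or.inl ⟨ci, hr, hp⟩
    · dsimp only at hc hr; subst hc
      exact Or.inr (Or.inl ⟨ci, hr, by rwa [Sym2.eq_swap] at hp⟩)
    · dsimp only at hc hr; subst hr
      have hcj : cj = j - 1 := eq_sub_of_add_eq hc.symm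
      subst hcj
      exact Or.inr (Or.inr (Or.inl hp))
    · dsimp only at hc hr; subst hr; subst hc
      exact Or.inr (Or.inr (Or.inr (by rwa [Sym2.eq_swap] at hp)))

lemma exUD (hT : cylIsTiling a 4 T) (i : Fin a) (j : ZMod 4) :
    ¬ (U T i j ∧ D T i j) := by
  rintro ⟨⟨i1, h1, m1⟩, ⟨i2, h2, m2⟩⟩
  have h := mem_unique T hT (x := (i, j)) m1 m2 (by simp) (by simp)
  rw [Sym2.eq_iff] at h
  rcases h with ⟨h3, -⟩ | ⟨h3, h4⟩
  · rw [Prod.mk.injEq] at h3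
    have := congrArg Fin.val h3.1; omega
  · rw [Prod.mk.injEq] at h3
    have := congrArg Fin.val h3.1; omega

lemma exUL (hT : cylIsTiling a 4 T) (i : Fin a) (j : ZMod 4) :
    ¬ (U T i j ∧ L T i j) := by
  rintro ⟨⟨i1, h1, m1⟩, m2⟩
  have h := mem_unique T hT (x := (i, j)) m1 m2 (by simp) (by simp)
  rw [Sym2.eq_iff] at h
  rcases h with ⟨h3, -⟩ | ⟨h3, -⟩ <;> rw [Prod.mk.injEq] at h3 <;>
    · have := congrArg Fin.val h3.1; omega

lemma exUR (hT : cylIsTiling a 4 T) (i : Fin a) (j : ZMod 4) :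
    ¬ (U T i j ∧ R T i j) := by
  rintro ⟨⟨i1, h1, m1⟩, m2⟩
  have h := mem_unique T hT (x := (i, j)) m1 m2 (by simp) (by simp)
  rw [Sym2.eq_iff] at h
  rcases h with ⟨h3, -⟩ | ⟨h3, -⟩ <;> rw [Prod.mk.injEq] at h3 <;>
    · have := congrArg Fin.val h3.1; omega

lemma exDL (hT : cylIsTiling a 4 T) (i : Fin a) (j : ZMod 4) :
    ¬ (D T i j ∧ L T i j) := by
  rintro ⟨⟨i1, h1, m1⟩, m2⟩
  have h := mem_unique T hT (x := (i, j)) m1 m2 (by simp) (by simp)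
  rw [Sym2.eq_iff] at h
  rcases h with ⟨-, h3⟩ | ⟨-, h3⟩ <;> rw [Prod.mk.injEq] at h3 <;>
    · have := congrArg Fin.val h3.1; omega

lemma exDR (hT : cylIsTiling a 4 T) (i : Fin a) (j : ZMod 4) :
    ¬ (D T i j ∧ R T i j) := by
  rintro ⟨⟨i1, h1, m1⟩, m2⟩
  have h := mem_unique T hT (x := (i, j)) m1 m2 (by simp) (by simp)
  rw [Sym2.eq_iff] at h
  rcases h with ⟨-, h3⟩ | ⟨-, h3⟩ <;> rw [Prod.mk.injEq] at h3 <;>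
    · have := congrArg Fin.val h3.1; omega

lemma exLR (hT : cylIsTiling a 4 T) (i : Fin a) (j : ZMod 4) :
    ¬ (L T i j ∧ R T i j) := by
  rintro ⟨m1, m2⟩
  have h := mem_unique T hT (x := (i, j)) m1 m2 (by simp) (by simp)
  rw [Sym2.eq_iff] at h
  rcases h with ⟨h3, -⟩ | ⟨h3, -⟩ <;> rw [Prod.mk.injEq] at h3
  · have h4 := h3.2
    have h5 : (1 : ZMod 4) = 0 := by linear_combination -h4
    exact absurd h5 (by decide)
  · have h4 := h3.2
    have h5 : (2 : ZMod 4) = 0 := by linear_combination -h4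
    exact absurd h5 (by decide)



lemma rowHyp_holds (hT : cylIsTiling a 4 T) (i : Fin a) :
    rowHyp (fun j => decide (U T i j) || decide (D T i j))
           (fun j => decide (L T i j)) (fun j => decide (R T i j)) := by
  intro j
  refine ⟨?_, ?_, ?_, ?_, ?_⟩
  · have := total T hT i j
    simpa [Bool.or_eq_true, decide_eq_true_iff, or_assoc] using this
  · simp only [Bool.or_eq_true, decide_eq_true_iff]
    rintro ⟨h1 | h1, h2⟩
    · exact exUL T hT i j ⟨h1, h2⟩
    · exact exDL T hT i j ⟨h1, h2⟩
  · simp only [Bool.or_eq_true, decide_eq_true_iff]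
    rintro ⟨h1 | h1, h2⟩
    · exact exUR T hT i j ⟨h1, h2⟩
    · exact exDR T hT i j ⟨h1, h2⟩
  · simp only [decide_eq_true_iff]
    exact exLR T hT i j
  · simp only [decide_eq_decide]
    exact R_iff_L T i j

noncomputable def cU (i : Fin a) : ℕ := #(filter (fun j => decide (U T i j) = true) univ)
noncomputable def cD (i : Fin a) : ℕ := #(filter (fun j => decide (D T i j) = true) univ)

noncomputable def sv (i : ℕ) : ℕ :=
  if h : i + 1 < a then cD T ⟨i, Nat.lt_of_succ_lt h⟩ else 0

lemma sv_eq {i : ℕ} (h : i + 1 < a) {h' : i < a} : sv T i = cD T ⟨i, h'⟩ := dif_pos h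

lemma cw_eq (hT : cylIsTiling a 4 T) (i : Fin a) :
    #(filter (fun j => (decide (U T i j) || decide (D T i j)) = true) univ)
      = cU T i + cD T i := by
  unfold cU cD
  rw [← cardSplit _ _ (fun j => by
    simp only [decide_eq_true_iff]
    exact exUD T hT i j)]
  apply congrArg
  apply filter_congr
  intro j _
  simp [Bool.or_eq_true]

lemma row1 (hT : cylIsTiling a 4 T) (i : Fin a) : (cU T i + cD T i) % 2 = 0 := by
  rw [← cw_eq T hT i]
  exact rowKey1 _ _ _ (rowHyp_holds T hT i)

lemma cw_le (hT : cylIsTiling a 4 T) (i : Fin a) : cU T i + cD T i ≤ 4 := by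
  rw [← cw_eq T hT i]
  exact le_trans (card_filter_le _ _) (by simp)

lemma row2 (hT : cylIsTiling a 4 T) (i : Fin a) (h : cU T i + cD T i = 4) :
    ∀ j, ¬ R T i j := by
  rw [← cw_eq T hT i] at h
  have := rowKey2 _ _ _ (rowHyp_holds T hT i) h
  intro j hj
  exact this j (by simpa [decide_eq_true_iff] using hj)

lemma row3 (hT : cylIsTiling a 4 T) (i : Fin a) (h : cU T i + cD T i = 2) :
    ∀ j j', R T i j → R T i j' → j = j' := by
  rw [← cw_eq T hT i] at h
  have := rowKey3 _ _ _ (rowHyp_holds T hT i) h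
  intro j j' hj hj'
  exact this j j' (by simpa [decide_eq_true_iff] using hj)
    (by simpa [decide_eq_true_iff] using hj')

lemma cU0 (h0 : 0 < a) : cU T ⟨0, h0⟩ = 0 := by
  apply card_eq_zero.2
  rw [filter_eq_empty_iff]
  intro j _
  simp only [decide_eq_true_iff]
  rintro ⟨i', h1, -⟩
  simp at h1

lemma cDlast (h0 : 0 < a) : cD T ⟨a - 1, by omega⟩ = 0 := by
  apply card_eq_zero.2
  rw [filter_eq_empty_iff]
  intro j _
  simp only [decide_eq_true_iff]
  rintro ⟨i', h1, -⟩
  have := i'.isLt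
  simp at h1
  omega

lemma U_succ (i : ℕ) (h : i + 1 < a) (j : ZMod 4) :
    U T ⟨i + 1, h⟩ j ↔ D T ⟨i, Nat.lt_of_succ_lt h⟩ j := by
  constructor
  · rintro ⟨i', h1, m⟩
    have hi' : i' = ⟨i, Nat.lt_of_succ_lt h⟩ := Fin.ext (by simpa using h1)
    subst hi'
    exact ⟨⟨i + 1, h⟩, rfl, m⟩
  · rintro ⟨i', h1, m⟩
    have hi' : i' = ⟨i + 1, h⟩ := Fin.ext (by simpa using h1.symm)
    subst hi'
    exact ⟨⟨i, Nat.lt_of_succ_lt h⟩, rfl, m⟩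

lemma cU_succ (i : ℕ) (h : i + 1 < a) : cU T ⟨i + 1, h⟩ = sv T i := by
  rw [sv_eq T (h := h)]
  unfold cU cD
  apply congrArg
  apply filter_congr
  intro j _
  simp only [decide_eq_true_iff, eq_iff_iff]
  exact U_succ T i h j

lemma sv_pos (hF : cylFaultFree a 4 T) (i : ℕ) (h : i + 1 < a) : 0 < sv T i := by
  obtain ⟨c, d, hm, hcol, hc1, hd1⟩ := hF.1 i h
  rw [sv_eq T h (h' := Nat.lt_of_succ_lt h)]
  apply card_pos.2
  refine ⟨c.2, mem_filter.2 ⟨mem_univ _, ?_⟩⟩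
  simp only [decide_eq_true_iff]
  refine ⟨d.1, by simpa using hd1.symm, ?_⟩
  have hc : c = (⟨i, Nat.lt_of_succ_lt h⟩, c.2) := by
    rw [← Prod.mk.eta (p := c)]
    exact Prod.ext (Fin.ext (by simpa using hc1)) rfl
  have hd : d = (d.1, c.2) := by
    rw [← Prod.mk.eta (p := d)]
    exact Prod.ext rfl hcol.symm
  rw [← hc, ← hd]
  exact hm

lemma sv_two (hT : cylIsTiling a 4 T) (hF : cylFaultFree a 4 T) (ha : 4 ≤ a) :
    ∀ i, i + 1 < a → sv T i = 2 := by
  intro i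
  induction i with
  | zero =>
    intro h
    have h1 : 1 + 1 < a := by omega
    have e0 : (cU T ⟨0, by omega⟩ + cD T ⟨0, by omega⟩) % 2 = 0 := row1 T hT _
    rw [cU0 T (by omega), ← sv_eq T h] at e0
    have p0 : 0 < sv T 0 := sv_pos T hF 0 h
    have p1 : 0 < sv T 1 := sv_pos T hF 1 h1
    have h01 : 0 + 1 < a := by omega
    have le1 : cU T ⟨0 + 1, h01⟩ + cD T ⟨0 + 1, h01⟩ ≤ 4 := cw_le T hT _
    rw [cU_succ T 0 h01, ← sv_eq T h1] at le1
    omega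
  | succ i ih =>
    intro h
    have hi : i + 1 < a := by omega
    have h2 := ih hi
    have e : (cU T ⟨i + 1, hi⟩ + cD T ⟨i + 1, hi⟩) % 2 = 0 := row1 T hT _
    rw [cU_succ T i hi, ← sv_eq T h] at e
    have le1 : cU T ⟨i + 1, hi⟩ + cD T ⟨i + 1, hi⟩ ≤ 4 := cw_le T hT _
    rw [cU_succ T i hi, ← sv_eq T h] at le1
    have p : 0 < sv T (i + 1) := sv_pos T hF (i + 1) h
    omega

end

end CylAux

/-- For every natural number `n`, the cylindrical board `(4 + n)′ × (4)`
does not admit a fault-free domino tiling. -/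
theorem cyl_not_faultFree_4n'4 :
    ∀ n : ℕ, ¬ cylFaultFreeTileable (4 + n) (4) := by
  classical
  rintro n ⟨T, hT, hF⟩
  open CylAux in
  have ha : 4 ≤ 4 + n := Nat.le_add_right 4 n
  have hsv := CylAux.sv_two T hT hF ha
  have htop : ∀ j j', CylAux.R T ⟨0, by omega⟩ j → CylAux.R T ⟨0, by omega⟩ j' → j = j' := by
    apply CylAux.row3 T hT
    rw [CylAux.cU0 T (by omega), ← CylAux.sv_eq T (show 0 + 1 < 4 + n by omega),
      hsv 0 (by omega)]
  have hbot : ∀ j j', CylAux.R T ⟨4 + n - 1, by omega⟩ j →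
      CylAux.R T ⟨4 + n - 1, by omega⟩ j' → j = j' := by
    apply CylAux.row3 T hT
    rw [show (⟨4 + n - 1, by omega⟩ : Fin (4 + n)) = ⟨(4 + n - 2) + 1, by omega⟩ from
      Fin.mk_eq_mk.mpr (by omega)]
    rw [CylAux.cU_succ T (4 + n - 2) (by omega)]
    rw [show (⟨4 + n - 2 + 1, by omega⟩ : Fin (4 + n)) = ⟨4 + n - 1, by omega⟩ from
      Fin.mk_eq_mk.mpr (by omega)]
    rw [CylAux.cDlast T (by omega), hsv (4 + n - 2) (by omega)]
  have claim : ∀ j : ZMod 4,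
      CylAux.R T ⟨0, by omega⟩ j ∨ CylAux.R T ⟨4 + n - 1, by omega⟩ j := by
    intro j
    obtain ⟨i, hi⟩ := hF.2 j
    have hR : CylAux.R T i j := hi
    rcases Nat.eq_zero_or_pos (i : ℕ) with h0 | h0
    · left
      rwa [show (⟨0, by omega⟩ : Fin (4 + n)) = i from Fin.ext (by simp [h0])]
    by_cases hlast : (i : ℕ) = 4 + n - 1
    · right
      rwa [show (⟨4 + n - 1, by omega⟩ : Fin (4 + n)) = i from Fin.ext (by simp [hlast])]
    exfalso
    have hlt : (i : ℕ) + 1 < 4 + n := by have := i.isLt; omega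
    have hieq : i = ⟨((i : ℕ) - 1) + 1, by omega⟩ := Fin.ext (show (i : ℕ) = (i : ℕ) - 1 + 1 by omega)
    rw [hieq] at hR
    refine CylAux.row2 T hT _ ?_ j hR
    rw [CylAux.cU_succ T ((i : ℕ) - 1) (by omega),
      ← CylAux.sv_eq T (show ((i : ℕ) - 1 + 1) + 1 < 4 + n by omega),
      hsv ((i : ℕ) - 1) (by omega), hsv ((i : ℕ) - 1 + 1) (by omega)]
  let f : ZMod 4 → Bool := fun j => decide (CylAux.R T ⟨0, by omega⟩ j)
  have hinj : Function.Injective f := by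
    intro j j' hjj
    by_cases hfj : CylAux.R T ⟨0, by omega⟩ j
    · have hfj' : CylAux.R T ⟨0, by omega⟩ j' := by
        have : f j' = true := by rw [← hjj]; exact decide_eq_true hfj
        exact of_decide_eq_true this
      exact htop _ _ hfj hfj'
    · have hfj' : ¬ CylAux.R T ⟨0, by omega⟩ j' := by
        have : f j' = false := by rw [← hjj]; exact decide_eq_false hfj
        exact of_decide_eq_false this
      have hb : CylAux.R T ⟨4 + n - 1, by omega⟩ j := (claim j).resolve_left hfj
      have hb' : CylAux.R T ⟨4 + n - 1, by omega⟩ j' := (claim j').resolve_left hfj'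
      exact hbot _ _ hb hb'
  have hcard := Fintype.card_le_of_injective f hinj
  rw [ZMod.card, Fintype.card_bool] at hcard
  omega
end
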